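/- arXiv:2510.20698 — 4 statements merged into one kernel-verified Lean document; each statement's English description precedes it below -/
import Mathlib

section
/- Let n ≥ 1 and k ≥ 1 be natural numbers, and for each i ∈ {1, …, n} define a(i) = k · (number of permutations σ of {1, …, n} with σ⁻¹(i) < σ⁻¹(j) for all j < i). Then (i) a(i) = k·n!/i for every i; (ii) a is strictly decreasing: a(i) > a(j) whenever 1 ≤ i < j ≤ n; and (iii) the outcome a is individually fair for every creator: for each i, the cardinality of {j ∈ {1, …, n} : a(j) ≥ a(i)} equals i, and in particular is at most i. -/
open Finset

lemma key_count (n : ℕ) (i : Fin n) :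
    ((univ.filter (fun σ : Equiv.Perm (Fin n) =>
      ∀ j : Fin n, j < i → σ.symm i < σ.symm j)).card) * ((i : ℕ) + 1) = n.factorial := by
  classical
  set s := (univ.filter (fun σ : Equiv.Perm (Fin n) =>
      ∀ j : Fin n, j < i → σ.symm i < σ.symm j)) with hs
  have hIne : (Finset.Iic i).Nonempty := ⟨i, by simp⟩
  choose f hf1 hf2 using fun σ : Equiv.Perm (Fin n) =>
    Finset.exists_min_image (Finset.Iic i) (fun j => σ.symm j) hIne
  have hsymm : ∀ (σ : Equiv.Perm (Fin n)) (m y : Fin n),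
      (σ.trans (Equiv.swap i m)).symm y = σ.symm (Equiv.swap i m y) := by
    intro σ m y; simp [Equiv.symm_trans_apply]
  have hswapIic : ∀ m j : Fin n, m ∈ Finset.Iic i → j ∈ Finset.Iic i →
      Equiv.swap i m j ∈ Finset.Iic i := by
    intro m j hm hj
    rcases eq_or_ne j i with rfl | hji
    · simpa [Equiv.swap_apply_left] using hm
    rcases eq_or_ne j m with rfl | hjm
    · simp [Equiv.swap_apply_right, Finset.mem_Iic]
    · rwa [Equiv.swap_apply_of_ne_of_ne hji hjm]
  have hcards : s.card * ((i : ℕ) + 1) = (s ×ˢ Finset.Iic i).card := by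
    rw [Finset.card_product, Fin.card_Iic]
  rw [hcards]
  have hbij := Finset.card_nbij' (s := s ×ˢ Finset.Iic i)
      (t := (univ : Finset (Equiv.Perm (Fin n))))
      (fun p => p.1.trans (Equiv.swap i p.2))
      (fun σ => (σ.trans (Equiv.swap i (f σ)), f σ))
      (by intro p hp; simp)
      ?_ ?_ ?_
  · rw [hbij, Finset.card_univ, Fintype.card_perm, Fintype.card_fin]
  · -- σ ↦ (σ.trans (swap i (f σ)), f σ) lands in s ×ˢ Iic i
    intro σ _
    refine Finset.mem_product.2 ⟨?_, hf1 σ⟩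
    rw [hs, Finset.mem_filter]
    refine ⟨Finset.mem_univ _, ?_⟩
    intro j hj
    rw [hsymm, hsymm, Equiv.swap_apply_left]
    have hne : Equiv.swap i (f σ) j ≠ f σ := by
      intro h
      have h2 := congrArg (Equiv.swap i (f σ)) h
      rw [Equiv.swap_apply_self, Equiv.swap_apply_right] at h2
      exact absurd h2 (ne_of_lt hj)
    have hmem : Equiv.swap i (f σ) j ∈ Finset.Iic i :=
      hswapIic _ _ (hf1 σ) (Finset.mem_Iic.2 hj.le)
    exact lt_of_le_of_ne (hf2 σ _ hmem)
      (fun h => hne (σ.symm.injective h).symm)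
  · -- left inverse
    rintro ⟨σ', m⟩ hp
    rw [Finset.mem_coe, Finset.mem_product] at hp
    obtain ⟨hσ', hm⟩ := hp
    rw [hs, Finset.mem_filter] at hσ'
    set σ := σ'.trans (Equiv.swap i m) with hσdef
    have hfm : f σ = m := by
      by_contra hne
      have hu : Equiv.swap i m (f σ) ∈ Finset.Iic i := hswapIic _ _ hm (hf1 σ)
      have hui : Equiv.swap i m (f σ) ≠ i := by
        intro h
        have h2 := congrArg (Equiv.swap i m) h
        rw [Equiv.swap_apply_self, Equiv.swap_apply_left] at h2
        exact hne h2
      have hult : Equiv.swap i m (f σ) < i :=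
        lt_of_le_of_ne (Finset.mem_Iic.1 hu) hui
      have h1 : σ'.symm i < σ'.symm (Equiv.swap i m (f σ)) := hσ'.2 _ hult
      have h2 : σ.symm (f σ) ≤ σ.symm m := hf2 σ m hm
      rw [hsymm, hsymm, Equiv.swap_apply_right] at h2
      exact absurd h2 (not_le.2 h1)
    simp only [Prod.mk.injEq]
    constructor
    · rw [← hσdef, hfm, hσdef]
      ext x
      simp [Equiv.swap_apply_self]
    · exact hfm
  · -- right inverse
    intro σ _
    ext x
    simp [Equiv.swap_apply_self]

/-- Let `n ≥ 1` and `k ≥ 1`. For each creator index `i : Fin n`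
(representing creator `CC_(i+1)`, so that smaller index means higher quality), let
`a i = k · #{σ : Equiv.Perm (Fin n) | σ⁻¹(i) < σ⁻¹(j) for all j < i}`, the follower
count of creator `i` when each of the `n!` permutations of the creators is shown, in
order, to exactly `k` users.  Then
(i) `a i = k · n! / (i + 1)` for every `i` (with `i + 1` the 1-based rank of `i`);
(ii) `a` is strictly decreasing; and
(iii) the outcome `a` is individually fair for every creator: for each `i`, the number
of `j` with `a j ≥ a i` equals the 1-based rank `i + 1`, and in particular is at most
`i + 1`. -/
theorem permutation_strategy_fair (n k : ℕ) (hn : 1 ≤ n) (hk : 1 ≤ k)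
    (a : Fin n → ℕ)
    (ha : ∀ i : Fin n, a i =
      k * (Finset.univ.filter (fun σ : Equiv.Perm (Fin n) =>
        ∀ j : Fin n, j < i → σ.symm i < σ.symm j)).card) :
    (∀ i : Fin n, a i = k * n.factorial / ((i : ℕ) + 1)) ∧
    (∀ i j : Fin n, i < j → a j < a i) ∧
    (∀ i : Fin n,
      (Finset.univ.filter (fun j : Fin n => a i ≤ a j)).card = (i : ℕ) + 1 ∧
      (Finset.univ.filter (fun j : Fin n => a i ≤ a j)).card ≤ (i : ℕ) + 1) := by
  classical
  have hmul : ∀ i : Fin n, a i * ((i : ℕ) + 1) = k * n.factorial := by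
    intro i
    rw [ha i, mul_assoc, key_count]
  have hNpos : 0 < k * n.factorial :=
    Nat.mul_pos hk n.factorial_pos
  have hpos : ∀ i : Fin n, 0 < a i := by
    intro i
    rcases Nat.eq_zero_or_pos (a i) with h | h
    · exfalso
      have := hmul i
      rw [h, zero_mul] at this
      omega
    · exact h
  have part1 : ∀ i : Fin n, a i = k * n.factorial / ((i : ℕ) + 1) := by
    intro i
    exact (Nat.div_eq_of_eq_mul_left (Nat.succ_pos _) (hmul i).symm).symm
  have part2 : ∀ i j : Fin n, i < j → a j < a i := by
    intro i j hij
    by_contra h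
    push_neg at h
    have hij' : (i : ℕ) + 1 < (j : ℕ) + 1 := by
      have := (Fin.lt_iff_val_lt_val.1 hij); omega
    have : k * n.factorial < k * n.factorial := by
      calc k * n.factorial = a i * ((i : ℕ) + 1) := (hmul i).symm
        _ < a i * ((j : ℕ) + 1) := Nat.mul_lt_mul_of_le_of_lt le_rfl hij' (hpos i)
        _ ≤ a j * ((j : ℕ) + 1) := Nat.mul_le_mul_right _ h
        _ = k * n.factorial := hmul j
    exact lt_irrefl _ this
  refine ⟨part1, part2, ?_⟩
  intro i
  have hfilter : (Finset.univ.filter (fun j : Fin n => a i ≤ a j)) = Finset.Iic i := by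
    ext j
    simp only [Finset.mem_filter, Finset.mem_univ, true_and, Finset.mem_Iic]
    constructor
    · intro h
      by_contra hji
      push_neg at hji
      exact absurd h (not_le.2 (part2 i j hji))
    · intro h
      rcases eq_or_lt_of_le h with rfl | h'
      · exact le_rfl
      · exact (part2 j i h').le
  rw [hfilter, Fin.card_Iic]
  exact ⟨rfl, le_rfl⟩
end

section
/- In the noisy ordered pairwise comparison model with parameters k ∈ ℕ and p ∈ [0, 1], the expectation of X_j (the follower count of the lower-quality creator after both comparison steps) equals kp + 2kp(1 − p) = kp(3 − 2p). -/
open MeasureTheory ProbabilityTheory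

section NoisyAux
open Finset
open scoped ENNReal

lemma bernstein_eval (n : ℕ) (r : ℝ) :
    ∑ ν ∈ range (n+1), (ν : ℝ) * ((n.choose ν) * r^ν * (1-r)^(n-ν)) = n * r := by
  have := congrArg (Polynomial.eval r) (bernsteinPolynomial.sum_smul ℝ n)
  simp [bernsteinPolynomial, Polynomial.eval_finset_sum, mul_comm, mul_assoc, mul_left_comm] at this
  rw [mul_comm (n:ℝ) r, ← this]
  exact Finset.sum_congr rfl fun ν _ => by ring

lemma bernstein_sum (n : ℕ) (r : ℝ) :
    ∑ ν ∈ range (n+1), ((n.choose ν : ℝ) * r^ν * (1-r)^(n-ν)) = 1 := by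
  have := congrArg (Polynomial.eval r) (bernsteinPolynomial.sum ℝ n)
  simp [bernsteinPolynomial, Polynomial.eval_finset_sum, mul_comm, mul_assoc, mul_left_comm] at this
  refine Eq.trans ?_ this
  exact Finset.sum_congr rfl fun ν _ => by ring

lemma binomial_toReal (q : NNReal) (h : q ≤ 1) (n : ℕ) (i : Fin (n+1)) :
    ((PMF.binomial q h n) i).toReal = (n.choose i : ℝ) * q.toReal ^ (i:ℕ) * (1 - q.toReal)^(n - (i:ℕ)) := by
  rw [PMF.binomial_apply, Fin.val_last, ENNReal.toReal_mul, ENNReal.toReal_mul,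
    ENNReal.toReal_pow, ENNReal.toReal_pow,
    ENNReal.toReal_sub_of_le (by exact_mod_cast h) ENNReal.one_ne_top,
    ENNReal.toReal_one, ENNReal.toReal_natCast, ENNReal.coe_toReal]
  ring

lemma binom_sum_one (q : NNReal) (h : q ≤ 1) (n : ℕ) :
    ∑ i : Fin (n+1), ((PMF.binomial q h n) i).toReal = 1 := by
  simp only [binomial_toReal]
  rw [Fin.sum_univ_eq_sum_range (fun i => (n.choose i : ℝ) * q.toReal ^ i * (1 - q.toReal)^(n - i))]
  exact bernstein_sum n q.toReal

lemma binom_mean (q : NNReal) (h : q ≤ 1) (n : ℕ) :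
    ∑ i : Fin (n+1), ((PMF.binomial q h n) i).toReal * ((i:ℕ):ℝ) = n * q.toReal := by
  simp only [binomial_toReal]
  rw [Fin.sum_univ_eq_sum_range (fun i => (n.choose i : ℝ) * q.toReal ^ i * (1 - q.toReal)^(n - i) * i)]
  rw [← bernstein_eval n q.toReal]
  exact Finset.sum_congr rfl fun ν _ => by ring

lemma binom_shift (q : NNReal) (h : q ≤ 1) (n : ℕ) (a : ℝ) :
    ∑ i : Fin (n+1), ((PMF.binomial q h n) i).toReal * (a + ((i:ℕ):ℝ)) = a + n * q.toReal := by
  simp only [mul_add]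
  rw [Finset.sum_add_distrib, ← Finset.sum_mul, binom_sum_one, binom_mean, one_mul]

lemma binom_const (q : NNReal) (h : q ≤ 1) (n : ℕ) (a : ℝ) :
    ∑ i : Fin (n+1), ((PMF.binomial q h n) i).toReal * a = a := by
  rw [← Finset.sum_mul, binom_sum_one, one_mul]

lemma pmf_bind_toMeasure {α β : Type*} [Fintype α] [MeasurableSpace β] (p : PMF α)
    (q : α → PMF β) :
    (p.bind q).toMeasure = ∑ a : α, (p a) • (q a).toMeasure := by
  ext s hs
  rw [PMF.toMeasure_bind_apply _ _ _ hs, tsum_fintype, Measure.finset_sum_apply]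
  simp [Measure.smul_apply, smul_eq_mul]

lemma pmf_coe_ne_top {α : Type*} (p : PMF α) (a : α) : p a ≠ ⊤ :=
  ((PMF.coe_le_one p a).trans_lt ENNReal.one_lt_top).ne

lemma pmf_integrable_bind {α β : Type*} [Fintype α] [MeasurableSpace β] (p : PMF α)
    (q : α → PMF β) (f : β → ℝ) (hq : ∀ a, Integrable f (q a).toMeasure) :
    Integrable f (p.bind q).toMeasure := by
  rw [pmf_bind_toMeasure]
  exact integrable_finset_sum_measure.2 fun a _ => (hq a).smul_measure (pmf_coe_ne_top p a)

lemma pmf_integral_bind {α β : Type*} [Fintype α] [MeasurableSpace β] (p : PMF α)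
    (q : α → PMF β) (f : β → ℝ) (hq : ∀ a, Integrable f (q a).toMeasure) :
    ∫ b, f b ∂(p.bind q).toMeasure = ∑ a : α, (p a).toReal * ∫ b, f b ∂(q a).toMeasure := by
  rw [pmf_bind_toMeasure, integral_finset_sum_measure
    (fun a _ => (hq a).smul_measure (pmf_coe_ne_top p a))]
  exact Finset.sum_congr rfl fun a _ => by
    rw [integral_smul_measure]; rfl

lemma pmf_integral_map {α β : Type*} [Fintype α] [MeasurableSpace α] [MeasurableSingletonClass α]
    [Countable β] [MeasurableSpace β] [MeasurableSingletonClass β]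
    (p : PMF α) (g : α → β) (f : β → ℝ) :
    ∫ b, f b ∂(p.map g).toMeasure = ∑ a : α, (p a).toReal * f (g a) := by
  rw [← PMF.toMeasure_map (f := g) p (measurable_of_countable g),
    integral_map (measurable_of_countable g).aemeasurable
      (measurable_of_countable f).aestronglyMeasurable,
    PMF.integral_eq_sum]
  rfl

lemma pmf_integrable_map {α β : Type*} [Fintype α] [MeasurableSpace α] [MeasurableSingletonClass α]
    [Countable β] [MeasurableSpace β] [MeasurableSingletonClass β]
    (p : PMF α) (g : α → β) (f : β → ℝ) :
    Integrable f (p.map g).toMeasure := by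
  rw [← PMF.toMeasure_map (f := g) p (measurable_of_countable g),
    integrable_map_measure (measurable_of_countable f).aestronglyMeasurable
      (measurable_of_countable g).aemeasurable]
  exact .of_finite

end NoisyAux

/-- The joint distribution of the follower counts `(X_i, X_j)` of the higher-quality
creator `CC_i` and the lower-quality creator `CC_j` in the noisy ordered pairwise
comparison model with group size `k` and signal `p ∈ [0, 1]`:
draw `x ~ Binomial(k, p)` (followers of `CC_i` from the `(i, j)` group at step 1);
independently draw `b₁ ~ Binomial(k, p)`, `b₂ ~ Binomial(k, p)`, `c ~ Binomial(x, 1 − p)`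
and `d ~ Binomial(k − x, p)`; set `X_i = b₁ + x` and `X_j = b₂ + c + d`. -/
noncomputable def noisyPair (k : ℕ) (p : ℝ) (hp0 : 0 ≤ p) (hp1 : p ≤ 1) : PMF (ℕ × ℕ) :=
  (PMF.binomial (Real.toNNReal p) (Real.toNNReal_le_one.mpr hp1) k).bind fun x =>
  (PMF.binomial (Real.toNNReal p) (Real.toNNReal_le_one.mpr hp1) k).bind fun b₁ =>
  (PMF.binomial (Real.toNNReal p) (Real.toNNReal_le_one.mpr hp1) k).bind fun b₂ =>
  (PMF.binomial (1 - Real.toNNReal p) tsub_le_self (x : ℕ)).bind fun c =>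
  (PMF.binomial (Real.toNNReal p) (Real.toNNReal_le_one.mpr hp1) (k - (x : ℕ))).map fun d =>
  ((b₁ : ℕ) + (x : ℕ), (b₂ : ℕ) + (c : ℕ) + (d : ℕ))

/-- In the noisy ordered pairwise comparison model with parameters
`k ∈ ℕ` and `p ∈ [0, 1]`, the expectation of `X_j` (the follower count of the
lower-quality creator after both comparison steps) equals
`kp + 2kp(1 − p) = kp(3 − 2p)`. -/
theorem expectation_Xj (k : ℕ) (p : ℝ) (hp0 : 0 ≤ p) (hp1 : p ≤ 1) :
    ∫ ω, ((ω.2 : ℕ) : ℝ) ∂(noisyPair k p hp0 hp1).toMeasure = k * p * (3 - 2 * p) := by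
  set q : NNReal := Real.toNNReal p with hqdef
  have hq : q ≤ 1 := Real.toNNReal_le_one.mpr hp1
  have hqr : q.toReal = p := Real.coe_toNNReal _ hp0
  have h1q : (1 - q) ≤ 1 := tsub_le_self
  have h1qr : (1 - q).toReal = 1 - p := by
    rw [NNReal.coe_sub hq, NNReal.coe_one, hqr]
  set f : ℕ × ℕ → ℝ := fun ω => ((ω.2 : ℕ) : ℝ) with hfdef
  have hfuse : ∀ (n : ℕ) (g : ℕ → ℕ × ℕ),
      (((PMF.binomial q hq n).bind fun a => pure ((a:ℕ))).map g)
        = (PMF.binomial q hq n).map (fun d : Fin (n+1) => g (d:ℕ)) := by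
    intro n g
    rw [show ((PMF.binomial q hq n).bind fun a => pure ((a:ℕ)))
        = (PMF.binomial q hq n).map Fin.val from rfl, PMF.map_comp]
    rfl
  have hnp : noisyPair k p hp0 hp1 =
      (PMF.binomial q hq k).bind fun x =>
      (PMF.binomial q hq k).bind fun b₁ =>
      (PMF.binomial q hq k).bind fun b₂ =>
      (PMF.binomial (1-q) h1q (x:ℕ)).bind fun c =>
      (PMF.binomial q hq (k - (x:ℕ))).map
        (fun d : Fin (k - (x:ℕ) + 1) => ((b₁:ℕ)+(x:ℕ), (b₂:ℕ)+(c:ℕ)+(d:ℕ))) := by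
    rw [noisyPair]
    refine congrArg _ (funext fun x => ?_)
    refine congrArg _ (funext fun b₁ => ?_)
    refine congrArg _ (funext fun b₂ => ?_)
    refine congrArg _ (funext fun c => ?_)
    exact hfuse (k - (x:ℕ)) _
  -- integrability
  have int4 : ∀ (x b₁ b₂ : Fin (k+1)) (c : Fin ((x:ℕ)+1)),
      Integrable f ((PMF.binomial q hq (k - (x:ℕ))).map
        (fun d : Fin (k - (x:ℕ) + 1) => ((b₁:ℕ)+(x:ℕ), (b₂:ℕ)+(c:ℕ)+(d:ℕ)))).toMeasure :=
    fun x b₁ b₂ c => pmf_integrable_map _ _ _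
  have int3 : ∀ (x b₁ b₂ : Fin (k+1)),
      Integrable f ((PMF.binomial (1-q) h1q (x:ℕ)).bind fun c =>
        (PMF.binomial q hq (k - (x:ℕ))).map
          (fun d : Fin (k - (x:ℕ) + 1) => ((b₁:ℕ)+(x:ℕ), (b₂:ℕ)+(c:ℕ)+(d:ℕ)))).toMeasure :=
    fun x b₁ b₂ => pmf_integrable_bind _ _ _ (int4 x b₁ b₂)
  have int2 : ∀ (x b₁ : Fin (k+1)),
      Integrable f ((PMF.binomial q hq k).bind fun b₂ =>
        (PMF.binomial (1-q) h1q (x:ℕ)).bind fun c =>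
        (PMF.binomial q hq (k - (x:ℕ))).map
          (fun d : Fin (k - (x:ℕ) + 1) => ((b₁:ℕ)+(x:ℕ), (b₂:ℕ)+(c:ℕ)+(d:ℕ)))).toMeasure :=
    fun x b₁ => pmf_integrable_bind _ _ _ (int3 x b₁)
  have int1 : ∀ (x : Fin (k+1)),
      Integrable f ((PMF.binomial q hq k).bind fun b₁ =>
        (PMF.binomial q hq k).bind fun b₂ =>
        (PMF.binomial (1-q) h1q (x:ℕ)).bind fun c =>
        (PMF.binomial q hq (k - (x:ℕ))).map
          (fun d : Fin (k - (x:ℕ) + 1) => ((b₁:ℕ)+(x:ℕ), (b₂:ℕ)+(c:ℕ)+(d:ℕ)))).toMeasure :=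
    fun x => pmf_integrable_bind _ _ _ (int2 x)
  -- expectations, innermost first
  have E4 : ∀ (x b₁ b₂ : Fin (k+1)) (c : Fin ((x:ℕ)+1)),
      ∫ b, f b ∂((PMF.binomial q hq (k - (x:ℕ))).map
        (fun d : Fin (k - (x:ℕ) + 1) => ((b₁:ℕ)+(x:ℕ), (b₂:ℕ)+(c:ℕ)+(d:ℕ)))).toMeasure
      = (((b₂:ℕ):ℝ) + ((c:ℕ):ℝ)) + ((k - (x:ℕ) : ℕ):ℝ) * p := by
    intro x b₁ b₂ c
    rw [pmf_integral_map]
    have : ∀ d : Fin ((k - (x:ℕ)) + 1),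
        f ((b₁:ℕ)+(x:ℕ), (b₂:ℕ)+(c:ℕ)+(d:ℕ)) = (((b₂:ℕ):ℝ) + ((c:ℕ):ℝ)) + ((d:ℕ):ℝ) := by
      intro d; simp only [hfdef]; push_cast; ring
    rw [Finset.sum_congr rfl fun d _ => by rw [this d]]
    rw [binom_shift, hqr]
  have E3 : ∀ (x b₁ b₂ : Fin (k+1)),
      ∫ b, f b ∂((PMF.binomial (1-q) h1q (x:ℕ)).bind fun c =>
        (PMF.binomial q hq (k - (x:ℕ))).map
          (fun d : Fin (k - (x:ℕ) + 1) => ((b₁:ℕ)+(x:ℕ), (b₂:ℕ)+(c:ℕ)+(d:ℕ)))).toMeasure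
      = ((b₂:ℕ):ℝ) + ((x:ℕ):ℝ) * (1 - p) + ((k - (x:ℕ) : ℕ):ℝ) * p := by
    intro x b₁ b₂
    rw [pmf_integral_bind _ _ _ (int4 x b₁ b₂)]
    rw [Finset.sum_congr rfl fun c _ => by rw [E4 x b₁ b₂ c]]
    have : ∀ c : Fin ((x:ℕ)+1),
        (((b₂:ℕ):ℝ) + ((c:ℕ):ℝ)) + ((k - (x:ℕ) : ℕ):ℝ) * p
          = (((b₂:ℕ):ℝ) + ((k - (x:ℕ) : ℕ):ℝ) * p) + ((c:ℕ):ℝ) := fun c => by ring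
    rw [Finset.sum_congr rfl fun c _ => by
      rw [this c]]
    rw [binom_shift, h1qr]
    ring
  have E2 : ∀ (x b₁ : Fin (k+1)),
      ∫ b, f b ∂((PMF.binomial q hq k).bind fun b₂ =>
        (PMF.binomial (1-q) h1q (x:ℕ)).bind fun c =>
        (PMF.binomial q hq (k - (x:ℕ))).map
          (fun d : Fin (k - (x:ℕ) + 1) => ((b₁:ℕ)+(x:ℕ), (b₂:ℕ)+(c:ℕ)+(d:ℕ)))).toMeasure
      = (k:ℝ) * p + ((x:ℕ):ℝ) * (1 - p) + ((k - (x:ℕ) : ℕ):ℝ) * p := by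
    intro x b₁
    rw [pmf_integral_bind _ _ _ (int3 x b₁)]
    rw [Finset.sum_congr rfl fun b₂ _ => by rw [E3 x b₁ b₂]]
    have : ∀ b₂ : Fin (k+1),
        ((b₂:ℕ):ℝ) + ((x:ℕ):ℝ) * (1 - p) + ((k - (x:ℕ) : ℕ):ℝ) * p
          = (((x:ℕ):ℝ) * (1 - p) + ((k - (x:ℕ) : ℕ):ℝ) * p) + ((b₂:ℕ):ℝ) := fun b₂ => by ring
    rw [Finset.sum_congr rfl fun b₂ _ => by rw [this b₂]]
    rw [binom_shift, hqr]
    ring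
  have E1 : ∀ (x : Fin (k+1)),
      ∫ b, f b ∂((PMF.binomial q hq k).bind fun b₁ =>
        (PMF.binomial q hq k).bind fun b₂ =>
        (PMF.binomial (1-q) h1q (x:ℕ)).bind fun c =>
        (PMF.binomial q hq (k - (x:ℕ))).map
          (fun d : Fin (k - (x:ℕ) + 1) => ((b₁:ℕ)+(x:ℕ), (b₂:ℕ)+(c:ℕ)+(d:ℕ)))).toMeasure
      = (k:ℝ) * p + ((x:ℕ):ℝ) * (1 - p) + ((k - (x:ℕ) : ℕ):ℝ) * p := by
    intro x
    rw [pmf_integral_bind _ _ _ (int2 x)]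
    rw [Finset.sum_congr rfl fun b₁ _ => by rw [E2 x b₁]]
    rw [binom_const]
  show ∫ b, f b ∂(noisyPair k p hp0 hp1).toMeasure = k * p * (3 - 2 * p)
  rw [hnp, pmf_integral_bind _ _ _ int1]
  rw [Finset.sum_congr rfl fun x _ => by rw [E1 x]]
  have hcast : ∀ x : Fin (k+1), ((k - (x:ℕ) : ℕ):ℝ) = (k:ℝ) - ((x:ℕ):ℝ) := by
    intro x
    exact_mod_cast Nat.cast_sub (Nat.lt_succ_iff.mp x.isLt)
  rw [Finset.sum_congr rfl fun x _ => by rw [hcast x]]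
  have expand : ∀ x : Fin (k+1),
      ((PMF.binomial q hq k) x).toReal * ((k:ℝ) * p + ((x:ℕ):ℝ) * (1 - p) + ((k:ℝ) - ((x:ℕ):ℝ)) * p)
      = ((PMF.binomial q hq k) x).toReal * ((k:ℝ) * p + (k:ℝ) * p)
        + ((PMF.binomial q hq k) x).toReal * ((x:ℕ):ℝ) * (1 - 2*p) := fun x => by ring
  rw [Finset.sum_congr rfl fun x _ => by rw [expand x]]
  rw [Finset.sum_add_distrib, ← Finset.sum_mul, ← Finset.sum_mul, binom_mean, binom_sum_one, hqr]
  ring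
end

section
/- In the noisy ordered pairwise comparison model with parameters k ∈ ℕ and p ∈ [0, 1], the variance of X_j (the follower count of the lower-quality creator) equals 2kp(1 − p) + (1 − 2p)²·kp(1 − p) = kp(1 − p)(2 + (1 − 2p)²). -/
open MeasureTheory ProbabilityTheory

section Aux

open Finset

/-- Weighted sum of a constant polynomial of binomial type. -/
private lemma Lmom0 (a b : ℝ) (hab : a + b = 1) (n : ℕ) :
    ∑ i ∈ Finset.range (n+1), a ^ i * b ^ (n - i) * (n.choose i : ℝ) = 1 := by
  rw [← add_pow, hab, one_pow]

private lemma key_choose (a b : ℝ) (m i : ℕ) :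
    a ^ (i+1) * b ^ (m+1-(i+1)) * ((m+1).choose (i+1) : ℝ) * ((i+1 : ℕ) : ℝ)
      = ((m+1 : ℕ) : ℝ) * a * (a ^ i * b ^ (m - i) * (m.choose i : ℝ)) := by
  have h := Nat.add_one_mul_choose_eq m i
  have h' : ((m+1 : ℕ) : ℝ) * (m.choose i : ℝ)
      = ((m+1).choose (i+1) : ℝ) * ((i+1 : ℕ) : ℝ) := by exact_mod_cast congrArg (Nat.cast (R := ℝ)) h
  rw [Nat.succ_sub_succ]
  push_cast at h' ⊢
  linear_combination (-(a ^ (i+1) * b ^ (m - i))) * h'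

private lemma Lmom1 (a b : ℝ) (hab : a + b = 1) (n : ℕ) :
    ∑ i ∈ Finset.range (n+1), a ^ i * b ^ (n - i) * (n.choose i : ℝ) * (i : ℝ) = n * a := by
  cases n with
  | zero => simp
  | succ m =>
    rw [Finset.sum_range_succ']
    have hshift : ∀ i ∈ Finset.range (m+1),
        a ^ (i+1) * b ^ (m+1-(i+1)) * ((m+1).choose (i+1) : ℝ) * ((i+1 : ℕ) : ℝ)
          = ((m+1 : ℕ) : ℝ) * a * (a ^ i * b ^ (m - i) * (m.choose i : ℝ)) :=
      fun i _ => key_choose a b m i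
    rw [Finset.sum_congr rfl hshift, ← Finset.mul_sum, Lmom0 a b hab m]
    push_cast
    ring

private lemma Lmom2' (a b : ℝ) (hab : a + b = 1) (n : ℕ) :
    ∑ i ∈ Finset.range (n+1), a ^ i * b ^ (n - i) * (n.choose i : ℝ) * ((i : ℝ) * ((i : ℝ) - 1))
      = (n : ℝ) * ((n : ℝ) - 1) * a ^ 2 := by
  cases n with
  | zero => norm_num
  | succ m =>
    rw [Finset.sum_range_succ']
    have hshift : ∀ i ∈ Finset.range (m+1),
        a ^ (i+1) * b ^ (m+1-(i+1)) * ((m+1).choose (i+1) : ℝ)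
            * (((i+1 : ℕ) : ℝ) * (((i+1 : ℕ) : ℝ) - 1))
          = ((m+1 : ℕ) : ℝ) * a * (a ^ i * b ^ (m - i) * (m.choose i : ℝ) * (i : ℝ)) := by
      intro i _
      have h := key_choose a b m i
      push_cast at h ⊢
      linear_combination (i : ℝ) * h
    rw [Finset.sum_congr rfl hshift, ← Finset.mul_sum, Lmom1 a b hab m]
    push_cast
    ring

private lemma Lmom2 (a b : ℝ) (hab : a + b = 1) (n : ℕ) :
    ∑ i ∈ Finset.range (n+1), a ^ i * b ^ (n - i) * (n.choose i : ℝ) * (i : ℝ) ^ 2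
      = (n : ℝ) * a + (n : ℝ) * ((n : ℝ) - 1) * a ^ 2 := by
  have hsplit : ∀ i ∈ Finset.range (n+1),
      a ^ i * b ^ (n - i) * (n.choose i : ℝ) * (i : ℝ) ^ 2
        = a ^ i * b ^ (n - i) * (n.choose i : ℝ) * ((i : ℝ) * ((i : ℝ) - 1))
          + a ^ i * b ^ (n - i) * (n.choose i : ℝ) * (i : ℝ) := fun i _ => by ring
  rw [Finset.sum_congr rfl hsplit, Finset.sum_add_distrib, Lmom2' a b hab, Lmom1 a b hab]
  ring

private lemma binom_toReal {ε : NNReal} (hε : ε ≤ 1) (n : ℕ) (i : Fin (n+1)) :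
    ((PMF.binomial ε hε n) i).toReal
      = ε.toReal ^ (i : ℕ) * (1 - ε).toReal ^ (n - (i : ℕ)) * (n.choose i : ℝ) := by
  have hsub : (1 - (ε : ENNReal)) = ((1 - ε : NNReal) : ENNReal) := by simp [ENNReal.coe_sub]
  have hsubR : (1 - (ε : ENNReal)).toReal = ((1 - ε : NNReal) : ℝ) := by
    rw [hsub, ENNReal.coe_toReal]
  rw [PMF.binomial_apply]
  simp only [Fin.val_last]
  simp [ENNReal.toReal_mul, ENNReal.toReal_pow, hsubR]

private lemma hab_toReal {ε : NNReal} (hε : ε ≤ 1) : ε.toReal + (1 - ε).toReal = 1 := by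
  rw [NNReal.coe_sub hε, NNReal.coe_one]
  ring

private lemma binomMom0 {ε : NNReal} (hε : ε ≤ 1) (n : ℕ) :
    ∑ i : Fin (n+1), ((PMF.binomial ε hε n) i).toReal = 1 := by
  rw [Finset.sum_congr rfl fun i _ => binom_toReal hε n i,
    Fin.sum_univ_eq_sum_range (fun j => ε.toReal ^ j * (1-ε).toReal ^ (n - j) * (n.choose j : ℝ))]
  exact Lmom0 _ _ (hab_toReal hε) n

private lemma binomMom1 {ε : NNReal} (hε : ε ≤ 1) (n : ℕ) :
    ∑ i : Fin (n+1), ((PMF.binomial ε hε n) i).toReal * ((i : ℕ) : ℝ) = n * ε.toReal := by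
  rw [Finset.sum_congr rfl fun i _ => by rw [binom_toReal hε n i],
    Fin.sum_univ_eq_sum_range
      (fun j => ε.toReal ^ j * (1-ε).toReal ^ (n - j) * (n.choose j : ℝ) * (j : ℝ))]
  exact Lmom1 _ _ (hab_toReal hε) n

private lemma binomMom2 {ε : NNReal} (hε : ε ≤ 1) (n : ℕ) :
    ∑ i : Fin (n+1), ((PMF.binomial ε hε n) i).toReal * ((i : ℕ) : ℝ) ^ 2
      = n * ε.toReal + n * ((n : ℝ) - 1) * ε.toReal ^ 2 := by
  rw [Finset.sum_congr rfl fun i _ => by rw [binom_toReal hε n i],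
    Fin.sum_univ_eq_sum_range
      (fun j => ε.toReal ^ j * (1-ε).toReal ^ (n - j) * (n.choose j : ℝ) * (j : ℝ) ^ 2)]
  exact Lmom2 _ _ (hab_toReal hε) n

private lemma quad_sum {n : ℕ} (w : Fin (n+1) → ℝ) (m1 m2 : ℝ)
    (h0 : ∑ i : Fin (n+1), w i = 1)
    (h1 : ∑ i : Fin (n+1), w i * ((i : ℕ) : ℝ) = m1)
    (h2 : ∑ i : Fin (n+1), w i * ((i : ℕ) : ℝ) ^ 2 = m2)
    (f : Fin (n+1) → ℝ) (A B C : ℝ)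
    (hf : ∀ i, f i = w i * (A + B * ((i : ℕ) : ℝ) + C * ((i : ℕ) : ℝ) ^ 2)) :
    ∑ i : Fin (n+1), f i = A + B * m1 + C * m2 := by
  have : ∀ i ∈ Finset.univ, f i
      = A * w i + B * (w i * ((i : ℕ) : ℝ)) + C * (w i * ((i : ℕ) : ℝ) ^ 2) :=
    fun i _ => by rw [hf i]; ring
  rw [Finset.sum_congr rfl this, Finset.sum_add_distrib, Finset.sum_add_distrib,
    ← Finset.mul_sum, ← Finset.mul_sum, ← Finset.mul_sum, h0, h1, h2, mul_one]

variable {β : Type*} [MeasurableSpace β] [MeasurableSingletonClass β] [Countable β]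

private lemma pmf_memLp (μ : PMF β) (hfin : μ.support.Finite) (g : β → ℝ) (q : ENNReal) :
    MemLp g q μ.toMeasure := by
  obtain ⟨C, hC⟩ := (hfin.toFinset.image fun a => ‖g a‖).exists_le
  apply MemLp.of_bound (measurable_of_countable g).aestronglyMeasurable C
  have hz : μ.toMeasure μ.supportᶜ = 0 := by
    rw [PMF.toMeasure_apply_eq_zero_iff (hs := (μ.supportᶜ).to_countable.measurableSet)]
    exact disjoint_compl_right
  have hmem : ∀ᵐ a ∂μ.toMeasure, a ∈ μ.support := mem_ae_iff.mpr hz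
  filter_upwards [hmem] with a ha
  exact hC _ (Finset.mem_image_of_mem _ (hfin.mem_toFinset.mpr ha))

private lemma pmf_integrable (μ : PMF β) (hfin : μ.support.Finite) (g : β → ℝ) :
    Integrable g μ.toMeasure :=
  memLp_one_iff_integrable.mp (pmf_memLp μ hfin g 1)

private lemma fin_supp_map {n : ℕ} (q : PMF (Fin (n+1))) (h : Fin (n+1) → β) :
    (q.map h).support.Finite := by
  rw [PMF.support_map]
  exact (Set.toFinite _).image h

private lemma fin_supp_bind {n : ℕ} (q : PMF (Fin (n+1))) (f : Fin (n+1) → PMF β)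
    (hf : ∀ a, (f a).support.Finite) : (q.bind f).support.Finite := by
  rw [PMF.support_bind]
  exact (Set.toFinite _).biUnion fun a _ => hf a

private lemma integral_bind_fin {n : ℕ} (q : PMF (Fin (n+1))) (f : Fin (n+1) → PMF β)
    (g : β → ℝ) (hfin : ∀ a, (f a).support.Finite) :
    ∫ b, g b ∂((q.bind f).toMeasure)
      = ∑ a : Fin (n+1), (q a).toReal * ∫ b, g b ∂((f a).toMeasure) := by
  have hmeas : (q.bind f).toMeasure = ∑ a : Fin (n+1), q a • (f a).toMeasure := by
    ext s hs
    rw [PMF.toMeasure_bind_apply _ _ _ hs, Measure.finset_sum_apply, tsum_fintype]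
    simp only [Measure.smul_apply, smul_eq_mul]
  rw [hmeas, integral_finset_sum_measure fun a _ =>
    (pmf_integrable (f a) (hfin a) g).smul_measure (PMF.apply_ne_top q a)]
  exact Finset.sum_congr rfl fun a _ => by rw [integral_smul_measure, smul_eq_mul]

private lemma integral_map_fin {n : ℕ} (q : PMF (Fin (n+1))) (h : Fin (n+1) → β) (g : β → ℝ) :
    ∫ b, g b ∂((q.map h).toMeasure) = ∑ a : Fin (n+1), (q a).toReal * g (h a) := by
  rw [← PMF.toMeasure_map h q (measurable_of_countable h),
    integral_map (measurable_of_countable h).aemeasurable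
      (measurable_of_countable g).aestronglyMeasurable,
    PMF.integral_eq_sum]
  simp [smul_eq_mul]

private lemma map_coeM {n : ℕ} (q : PMF (Fin (n+1))) (f : ℕ → ℕ × ℕ) :
    PMF.map f (do let a ← q; pure ((a : ℕ))) = q.map (fun d : Fin (n+1) => f (d : ℕ)) := by
  show PMF.map f (q.map (fun a : Fin (n+1) => (a : ℕ))) = _
  rw [PMF.map_comp]
  rfl

end Aux

/-- In the noisy ordered pairwise comparison model with parameters
`k ∈ ℕ` and `p ∈ [0, 1]`, the variance of `X_j` (the follower count of the
lower-quality creator) equals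
`2kp(1 − p) + (1 − 2p)²·kp(1 − p) = kp(1 − p)(2 + (1 − 2p)²)`. -/
theorem variance_Xj (k : ℕ) (p : ℝ) (hp0 : 0 ≤ p) (hp1 : p ≤ 1) :
    variance (fun ω : ℕ × ℕ => ((ω.2 : ℕ) : ℝ)) (noisyPair k p hp0 hp1).toMeasure
      = k * p * (1 - p) * (2 + (1 - 2 * p) ^ 2) := by
  have h1 : Real.toNNReal p ≤ 1 := Real.toNNReal_le_one.mpr hp1
  have hPt : (Real.toNNReal p).toReal = p := Real.coe_toNNReal p hp0
  have hQt : (1 - Real.toNNReal p).toReal = 1 - p := by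
    rw [NNReal.coe_sub h1, NNReal.coe_one, hPt]
  have hrepr : noisyPair k p hp0 hp1
      = (PMF.binomial (Real.toNNReal p) h1 k).bind fun x =>
        (PMF.binomial (Real.toNNReal p) h1 k).bind fun b₁ =>
        (PMF.binomial (Real.toNNReal p) h1 k).bind fun b₂ =>
        (PMF.binomial (1 - Real.toNNReal p) tsub_le_self (x : ℕ)).bind fun c =>
        (PMF.binomial (Real.toNNReal p) h1 (k - (x : ℕ))).map
          fun d : Fin (k - (x : ℕ) + 1) =>
          ((b₁ : ℕ) + (x : ℕ), (b₂ : ℕ) + (c : ℕ) + (d : ℕ)) := by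
    unfold noisyPair
    simp only [map_coeM]
  -- support of the whole PMF is finite
  have hsupp : (noisyPair k p hp0 hp1).support.Finite := by
    rw [hrepr]
    refine fin_supp_bind _ _ fun x => fin_supp_bind _ _ fun b₁ =>
      fin_supp_bind _ _ fun b₂ => fin_supp_bind _ _ fun c => fin_supp_map _ _
  -- unfold the integral into nested finite sums
  have main : ∀ G : ℕ → ℝ,
      ∫ ω, G ω.2 ∂(noisyPair k p hp0 hp1).toMeasure
        = ∑ x : Fin (k+1), ((PMF.binomial (Real.toNNReal p) h1 k) x).toReal *
          (∑ b₁ : Fin (k+1), ((PMF.binomial (Real.toNNReal p) h1 k) b₁).toReal *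
          (∑ b₂ : Fin (k+1), ((PMF.binomial (Real.toNNReal p) h1 k) b₂).toReal *
          (∑ c : Fin ((x : ℕ)+1),
              ((PMF.binomial (1 - Real.toNNReal p) tsub_le_self (x : ℕ)) c).toReal *
          (∑ d : Fin (k - (x : ℕ)+1),
              ((PMF.binomial (Real.toNNReal p) h1 (k - (x : ℕ))) d).toReal *
            G ((b₂ : ℕ) + (c : ℕ) + (d : ℕ)))))) := by
    intro G
    rw [hrepr]
    rw [integral_bind_fin _ _ _ (fun x => fin_supp_bind _ _ fun b₁ =>
      fin_supp_bind _ _ fun b₂ => fin_supp_bind _ _ fun c => fin_supp_map _ _)]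
    refine Finset.sum_congr rfl fun x _ => ?_
    congr 1
    rw [integral_bind_fin _ _ _ (fun b₁ => fin_supp_bind _ _ fun b₂ =>
      fin_supp_bind _ _ fun c => fin_supp_map _ _)]
    refine Finset.sum_congr rfl fun b₁ _ => ?_
    congr 1
    rw [integral_bind_fin _ _ _ (fun b₂ => fin_supp_bind _ _ fun c => fin_supp_map _ _)]
    refine Finset.sum_congr rfl fun b₂ _ => ?_
    congr 1
    rw [integral_bind_fin _ _ _ (fun c => fin_supp_map _ _)]
    refine Finset.sum_congr rfl fun c _ => ?_
    congr 1
    rw [integral_map_fin]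
  -- binomial moments, specialized
  have hm0B : ∀ n : ℕ, ∑ i : Fin (n+1),
      ((PMF.binomial (Real.toNNReal p) h1 n) i).toReal = 1 := fun n => binomMom0 h1 n
  have hm1B : ∀ n : ℕ, ∑ i : Fin (n+1),
      ((PMF.binomial (Real.toNNReal p) h1 n) i).toReal * ((i : ℕ) : ℝ) = n * p := fun n => by
    rw [binomMom1 h1 n, hPt]
  have hm2B : ∀ n : ℕ, ∑ i : Fin (n+1),
      ((PMF.binomial (Real.toNNReal p) h1 n) i).toReal * ((i : ℕ) : ℝ) ^ 2
        = n * p + n * ((n : ℝ) - 1) * p ^ 2 := fun n => by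
    rw [binomMom2 h1 n, hPt]
  have hm0C : ∀ n : ℕ, ∑ i : Fin (n+1),
      ((PMF.binomial (1 - Real.toNNReal p) tsub_le_self n) i).toReal = 1 := fun n =>
    binomMom0 tsub_le_self n
  have hm1C : ∀ n : ℕ, ∑ i : Fin (n+1),
      ((PMF.binomial (1 - Real.toNNReal p) tsub_le_self n) i).toReal * ((i : ℕ) : ℝ)
        = n * (1 - p) := fun n => by
    rw [binomMom1 tsub_le_self n, hQt]
  have hm2C : ∀ n : ℕ, ∑ i : Fin (n+1),
      ((PMF.binomial (1 - Real.toNNReal p) tsub_le_self n) i).toReal * ((i : ℕ) : ℝ) ^ 2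
        = n * (1 - p) + n * ((n : ℝ) - 1) * (1 - p) ^ 2 := fun n => by
    rw [binomMom2 tsub_le_self n, hQt]
  -- first moment, level by level
  have hd1 : ∀ (x : Fin (k+1)) (b₂ : Fin (k+1)) (c : Fin ((x : ℕ)+1)),
      ∑ d : Fin (k - (x : ℕ)+1),
          ((PMF.binomial (Real.toNNReal p) h1 (k - (x : ℕ))) d).toReal *
            ((((b₂ : ℕ) + (c : ℕ) + (d : ℕ) : ℕ)) : ℝ)
        = ((b₂ : ℕ) : ℝ) + ((c : ℕ) : ℝ) + ((k - (x : ℕ) : ℕ) : ℝ) * p := by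
    intro x b₂ c
    rw [quad_sum _ _ _ (hm0B _) (hm1B _) (hm2B _) _
      (((b₂ : ℕ) : ℝ) + ((c : ℕ) : ℝ)) 1 0 (fun d => by push_cast; ring)]
    ring
  have hc1 : ∀ (x : Fin (k+1)) (b₂ : Fin (k+1)),
      ∑ c : Fin ((x : ℕ)+1),
          ((PMF.binomial (1 - Real.toNNReal p) tsub_le_self (x : ℕ)) c).toReal *
          (∑ d : Fin (k - (x : ℕ)+1),
              ((PMF.binomial (Real.toNNReal p) h1 (k - (x : ℕ))) d).toReal *
            ((((b₂ : ℕ) + (c : ℕ) + (d : ℕ) : ℕ)) : ℝ))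
        = ((b₂ : ℕ) : ℝ) + ((k - (x : ℕ) : ℕ) : ℝ) * p + ((x : ℕ) : ℝ) * (1 - p) := by
    intro x b₂
    rw [Finset.sum_congr rfl fun c _ => by rw [hd1 x b₂ c]]
    rw [quad_sum _ _ _ (hm0C _) (hm1C _) (hm2C _) _
      (((b₂ : ℕ) : ℝ) + ((k - (x : ℕ) : ℕ) : ℝ) * p) 1 0 (fun c => by ring)]
    ring
  have hb1 : ∀ x : Fin (k+1),
      ∑ b₂ : Fin (k+1), ((PMF.binomial (Real.toNNReal p) h1 k) b₂).toReal *
          (∑ c : Fin ((x : ℕ)+1),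
            ((PMF.binomial (1 - Real.toNNReal p) tsub_le_self (x : ℕ)) c).toReal *
            (∑ d : Fin (k - (x : ℕ)+1),
                ((PMF.binomial (Real.toNNReal p) h1 (k - (x : ℕ))) d).toReal *
              ((((b₂ : ℕ) + (c : ℕ) + (d : ℕ) : ℕ)) : ℝ)))
        = (k : ℝ) * p + ((k - (x : ℕ) : ℕ) : ℝ) * p + ((x : ℕ) : ℝ) * (1 - p) := by
    intro x
    rw [Finset.sum_congr rfl fun b₂ _ => by rw [hc1 x b₂]]
    rw [quad_sum _ _ _ (hm0B _) (hm1B _) (hm2B _) _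
      (((k - (x : ℕ) : ℕ) : ℝ) * p + ((x : ℕ) : ℝ) * (1 - p)) 1 0 (fun b₂ => by ring)]
    ring
  -- second moment, level by level
  have hd2 : ∀ (x : Fin (k+1)) (b₂ : Fin (k+1)) (c : Fin ((x : ℕ)+1)),
      ∑ d : Fin (k - (x : ℕ)+1),
          ((PMF.binomial (Real.toNNReal p) h1 (k - (x : ℕ))) d).toReal *
            ((((b₂ : ℕ) + (c : ℕ) + (d : ℕ) : ℕ)) : ℝ) ^ 2
        = (((b₂ : ℕ) : ℝ) + ((c : ℕ) : ℝ)) ^ 2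
          + 2 * (((b₂ : ℕ) : ℝ) + ((c : ℕ) : ℝ)) * (((k - (x : ℕ) : ℕ) : ℝ) * p)
          + (((k - (x : ℕ) : ℕ) : ℝ) * p
            + ((k - (x : ℕ) : ℕ) : ℝ) * (((k - (x : ℕ) : ℕ) : ℝ) - 1) * p ^ 2) := by
    intro x b₂ c
    rw [quad_sum _ _ _ (hm0B _) (hm1B _) (hm2B _) _
      ((((b₂ : ℕ) : ℝ) + ((c : ℕ) : ℝ)) ^ 2) (2 * (((b₂ : ℕ) : ℝ) + ((c : ℕ) : ℝ))) 1
      (fun d => by push_cast; ring)]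
    ring
  have hc2 : ∀ (x : Fin (k+1)) (b₂ : Fin (k+1)),
      ∑ c : Fin ((x : ℕ)+1),
          ((PMF.binomial (1 - Real.toNNReal p) tsub_le_self (x : ℕ)) c).toReal *
          (∑ d : Fin (k - (x : ℕ)+1),
              ((PMF.binomial (Real.toNNReal p) h1 (k - (x : ℕ))) d).toReal *
            ((((b₂ : ℕ) + (c : ℕ) + (d : ℕ) : ℕ)) : ℝ) ^ 2)
        = (((b₂ : ℕ) : ℝ) ^ 2 + 2 * ((b₂ : ℕ) : ℝ) * (((k - (x : ℕ) : ℕ) : ℝ) * p)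
            + (((k - (x : ℕ) : ℕ) : ℝ) * p
              + ((k - (x : ℕ) : ℕ) : ℝ) * (((k - (x : ℕ) : ℕ) : ℝ) - 1) * p ^ 2))
          + (2 * ((b₂ : ℕ) : ℝ) + 2 * (((k - (x : ℕ) : ℕ) : ℝ) * p))
              * (((x : ℕ) : ℝ) * (1 - p))
          + (((x : ℕ) : ℝ) * (1 - p)
              + ((x : ℕ) : ℝ) * (((x : ℕ) : ℝ) - 1) * (1 - p) ^ 2) := by
    intro x b₂
    rw [Finset.sum_congr rfl fun c _ => by rw [hd2 x b₂ c]]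
    rw [quad_sum _ _ _ (hm0C _) (hm1C _) (hm2C _) _
      (((b₂ : ℕ) : ℝ) ^ 2 + 2 * ((b₂ : ℕ) : ℝ) * (((k - (x : ℕ) : ℕ) : ℝ) * p)
        + (((k - (x : ℕ) : ℕ) : ℝ) * p
          + ((k - (x : ℕ) : ℕ) : ℝ) * (((k - (x : ℕ) : ℕ) : ℝ) - 1) * p ^ 2))
      (2 * ((b₂ : ℕ) : ℝ) + 2 * (((k - (x : ℕ) : ℕ) : ℝ) * p)) 1 (fun c => by ring)]
    ring
  have hb2 : ∀ x : Fin (k+1),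
      ∑ b₂ : Fin (k+1), ((PMF.binomial (Real.toNNReal p) h1 k) b₂).toReal *
          (∑ c : Fin ((x : ℕ)+1),
            ((PMF.binomial (1 - Real.toNNReal p) tsub_le_self (x : ℕ)) c).toReal *
            (∑ d : Fin (k - (x : ℕ)+1),
                ((PMF.binomial (Real.toNNReal p) h1 (k - (x : ℕ))) d).toReal *
              ((((b₂ : ℕ) + (c : ℕ) + (d : ℕ) : ℕ)) : ℝ) ^ 2))
        = (((k - (x : ℕ) : ℕ) : ℝ) * p
              + ((k - (x : ℕ) : ℕ) : ℝ) * (((k - (x : ℕ) : ℕ) : ℝ) - 1) * p ^ 2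
              + 2 * (((k - (x : ℕ) : ℕ) : ℝ) * p) * (((x : ℕ) : ℝ) * (1 - p))
              + ((x : ℕ) : ℝ) * (1 - p)
              + ((x : ℕ) : ℝ) * (((x : ℕ) : ℝ) - 1) * (1 - p) ^ 2)
          + (2 * (((k - (x : ℕ) : ℕ) : ℝ) * p) + 2 * (((x : ℕ) : ℝ) * (1 - p))) * ((k : ℝ) * p)
          + ((k : ℝ) * p + (k : ℝ) * ((k : ℝ) - 1) * p ^ 2) := by
    intro x
    rw [Finset.sum_congr rfl fun b₂ _ => by rw [hc2 x b₂]]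
    rw [quad_sum _ _ _ (hm0B _) (hm1B _) (hm2B _) _
      ((((k - (x : ℕ) : ℕ) : ℝ) * p
          + ((k - (x : ℕ) : ℕ) : ℝ) * (((k - (x : ℕ) : ℕ) : ℝ) - 1) * p ^ 2
          + 2 * (((k - (x : ℕ) : ℕ) : ℝ) * p) * (((x : ℕ) : ℝ) * (1 - p))
          + ((x : ℕ) : ℝ) * (1 - p)
          + ((x : ℕ) : ℝ) * (((x : ℕ) : ℝ) - 1) * (1 - p) ^ 2))
      (2 * (((k - (x : ℕ) : ℕ) : ℝ) * p) + 2 * (((x : ℕ) : ℝ) * (1 - p))) 1 (fun b₂ => by ring)]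
    ring
  -- assemble the two expectations
  have hE1 : ∫ ω, ((ω.2 : ℕ) : ℝ) ∂(noisyPair k p hp0 hp1).toMeasure
      = 3 * (k : ℝ) * p - 2 * (k : ℝ) * p ^ 2 := by
    rw [main (fun m => (m : ℝ))]
    have hcollapse : ∀ x : Fin (k+1),
        ∑ b₁ : Fin (k+1), ((PMF.binomial (Real.toNNReal p) h1 k) b₁).toReal *
            (∑ b₂ : Fin (k+1), ((PMF.binomial (Real.toNNReal p) h1 k) b₂).toReal *
            (∑ c : Fin ((x : ℕ)+1),
              ((PMF.binomial (1 - Real.toNNReal p) tsub_le_self (x : ℕ)) c).toReal *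
            (∑ d : Fin (k - (x : ℕ)+1),
                ((PMF.binomial (Real.toNNReal p) h1 (k - (x : ℕ))) d).toReal *
              ((((b₂ : ℕ) + (c : ℕ) + (d : ℕ) : ℕ)) : ℝ))))
          = (k : ℝ) * p + ((k - (x : ℕ) : ℕ) : ℝ) * p + ((x : ℕ) : ℝ) * (1 - p) := by
      intro x
      rw [Finset.sum_congr rfl fun b₁ _ => by rw [hb1 x]]
      rw [quad_sum _ _ _ (hm0B _) (hm1B _) (hm2B _) _
        ((k : ℝ) * p + ((k - (x : ℕ) : ℕ) : ℝ) * p + ((x : ℕ) : ℝ) * (1 - p)) 0 0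
        (fun b₁ => by ring)]
      ring
    rw [Finset.sum_congr rfl fun x _ => by rw [hcollapse x]]
    rw [quad_sum _ _ _ (hm0B _) (hm1B _) (hm2B _) _
      (2 * (k : ℝ) * p) (1 - 2 * p) 0
      (fun x => by rw [Nat.cast_sub (Fin.is_le x)]; ring)]
    ring
  have hE2 : ∫ ω, ((ω.2 : ℕ) : ℝ) ^ 2 ∂(noisyPair k p hp0 hp1).toMeasure
      = (2 * (k : ℝ) * p - 2 * (k : ℝ) * p ^ 2 + 4 * (k : ℝ) ^ 2 * p ^ 2)
        + (4 * (k : ℝ) * p - 8 * (k : ℝ) * p ^ 2) * ((k : ℝ) * p)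
        + (1 - 4 * p + 4 * p ^ 2) * ((k : ℝ) * p + (k : ℝ) * ((k : ℝ) - 1) * p ^ 2) := by
    rw [main (fun m => (m : ℝ) ^ 2)]
    have hcollapse : ∀ x : Fin (k+1),
        ∑ b₁ : Fin (k+1), ((PMF.binomial (Real.toNNReal p) h1 k) b₁).toReal *
            (∑ b₂ : Fin (k+1), ((PMF.binomial (Real.toNNReal p) h1 k) b₂).toReal *
            (∑ c : Fin ((x : ℕ)+1),
              ((PMF.binomial (1 - Real.toNNReal p) tsub_le_self (x : ℕ)) c).toReal *
            (∑ d : Fin (k - (x : ℕ)+1),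
                ((PMF.binomial (Real.toNNReal p) h1 (k - (x : ℕ))) d).toReal *
              ((((b₂ : ℕ) + (c : ℕ) + (d : ℕ) : ℕ)) : ℝ) ^ 2)))
          = (((k - (x : ℕ) : ℕ) : ℝ) * p
                + ((k - (x : ℕ) : ℕ) : ℝ) * (((k - (x : ℕ) : ℕ) : ℝ) - 1) * p ^ 2
                + 2 * (((k - (x : ℕ) : ℕ) : ℝ) * p) * (((x : ℕ) : ℝ) * (1 - p))
                + ((x : ℕ) : ℝ) * (1 - p)
                + ((x : ℕ) : ℝ) * (((x : ℕ) : ℝ) - 1) * (1 - p) ^ 2)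
            + (2 * (((k - (x : ℕ) : ℕ) : ℝ) * p) + 2 * (((x : ℕ) : ℝ) * (1 - p)))
                * ((k : ℝ) * p)
            + ((k : ℝ) * p + (k : ℝ) * ((k : ℝ) - 1) * p ^ 2) := by
      intro x
      rw [Finset.sum_congr rfl fun b₁ _ => by rw [hb2 x]]
      rw [quad_sum _ _ _ (hm0B _) (hm1B _) (hm2B _) _
        ((((k - (x : ℕ) : ℕ) : ℝ) * p
            + ((k - (x : ℕ) : ℕ) : ℝ) * (((k - (x : ℕ) : ℕ) : ℝ) - 1) * p ^ 2
            + 2 * (((k - (x : ℕ) : ℕ) : ℝ) * p) * (((x : ℕ) : ℝ) * (1 - p))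
            + ((x : ℕ) : ℝ) * (1 - p)
            + ((x : ℕ) : ℝ) * (((x : ℕ) : ℝ) - 1) * (1 - p) ^ 2)
          + (2 * (((k - (x : ℕ) : ℕ) : ℝ) * p) + 2 * (((x : ℕ) : ℝ) * (1 - p)))
              * ((k : ℝ) * p)
          + ((k : ℝ) * p + (k : ℝ) * ((k : ℝ) - 1) * p ^ 2)) 0 0 (fun b₁ => by ring)]
      ring
    rw [Finset.sum_congr rfl fun x _ => by rw [hcollapse x]]
    rw [quad_sum _ _ _ (hm0B _) (hm1B _) (hm2B _) _
      (2 * (k : ℝ) * p - 2 * (k : ℝ) * p ^ 2 + 4 * (k : ℝ) ^ 2 * p ^ 2)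
      (4 * (k : ℝ) * p - 8 * (k : ℝ) * p ^ 2)
      (1 - 4 * p + 4 * p ^ 2)
      (fun x => by rw [Nat.cast_sub (Fin.is_le x)]; ring)]
  -- conclude via the variance formula
  have hmem : MemLp (fun ω : ℕ × ℕ => ((ω.2 : ℕ) : ℝ)) 2 (noisyPair k p hp0 hp1).toMeasure :=
    pmf_memLp _ hsupp _ 2
  rw [variance_eq_sub hmem]
  have hsq : ∫ ω, ((fun ω : ℕ × ℕ => ((ω.2 : ℕ) : ℝ)) ^ 2) ω
        ∂(noisyPair k p hp0 hp1).toMeasure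
      = ∫ ω, ((ω.2 : ℕ) : ℝ) ^ 2 ∂(noisyPair k p hp0 hp1).toMeasure := by
    congr 1
  rw [hsq, hE2, hE1]
  ring
end

section
/- In the noisy ordered pairwise comparison model with parameters k ∈ ℕ and p ∈ [0, 1], the covariance of X_i and X_j equals kp(1 − p)(1 − 2p). -/
open MeasureTheory ProbabilityTheory ENNReal

/-! ### Auxiliary sum identities for binomial moments -/

private theorem gsum_mass (a b : ℝ≥0∞) (n : ℕ) :
    ∑ i ∈ Finset.range (n+1), a^i * b^(n-i) * (n.choose i : ℝ≥0∞) = (a+b)^n :=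
  (add_pow a b n).symm

private theorem gsum_id (a b : ℝ≥0∞) (n : ℕ) :
    ∑ i ∈ Finset.range (n+1), a^i * b^(n-i) * (n.choose i : ℝ≥0∞) * (i : ℝ≥0∞)
      = (n : ℝ≥0∞) * a * (a+b)^(n-1) := by
  cases n with
  | zero => simp
  | succ m =>
    rw [Finset.sum_range_succ']
    have step : ∀ i : ℕ,
        a^(i+1) * b^(m+1-(i+1)) * ((m+1).choose (i+1) : ℝ≥0∞) * ((i+1 : ℕ) : ℝ≥0∞)
          = (((m+1 : ℕ) : ℝ≥0∞) * a) * (a^i * b^(m-i) * (m.choose i : ℝ≥0∞)) := by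
      intro i
      have key : (((m+1).choose (i+1) : ℕ) : ℝ≥0∞) * ((i+1 : ℕ) : ℝ≥0∞)
          = ((m+1 : ℕ) : ℝ≥0∞) * ((m.choose i : ℕ) : ℝ≥0∞) := by
        exact_mod_cast congrArg (Nat.cast (R := ℝ≥0∞)) (Nat.add_one_mul_choose_eq m i).symm
      rw [Nat.succ_sub_succ]
      calc a^(i+1) * b^(m-i) * ((m+1).choose (i+1) : ℝ≥0∞) * ((i+1 : ℕ) : ℝ≥0∞)
          = (a^i * b^(m-i) * a) * (((m+1).choose (i+1) : ℝ≥0∞) * ((i+1 : ℕ) : ℝ≥0∞)) := by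
            ring
        _ = (a^i * b^(m-i) * a) * (((m+1 : ℕ) : ℝ≥0∞) * ((m.choose i : ℕ) : ℝ≥0∞)) := by
            rw [key]
        _ = (((m+1 : ℕ) : ℝ≥0∞) * a) * (a^i * b^(m-i) * (m.choose i : ℝ≥0∞)) := by ring
    rw [Finset.sum_congr rfl fun i _ => step i]
    simp only [Nat.cast_zero, mul_zero, add_zero]
    rw [← Finset.mul_sum, gsum_mass]
    simp [mul_assoc]

private theorem gsum_rev (a b : ℝ≥0∞) (n : ℕ) :
    ∑ i ∈ Finset.range (n+1), a^i * b^(n-i) * (n.choose i : ℝ≥0∞) * ((n-i : ℕ) : ℝ≥0∞)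
      = (n : ℝ≥0∞) * b * (a+b)^(n-1) := by
  rw [← Finset.sum_range_reflect]
  have step : ∀ i ∈ Finset.range (n+1),
      a^(n+1-1-i) * b^(n-(n+1-1-i)) * (n.choose (n+1-1-i) : ℝ≥0∞) * ((n-(n+1-1-i) : ℕ) : ℝ≥0∞)
        = b^i * a^(n-i) * (n.choose i : ℝ≥0∞) * (i : ℝ≥0∞) := by
    intro i hi
    have hi' : i ≤ n := Nat.lt_succ_iff.mp (Finset.mem_range.mp hi)
    simp only [Nat.add_sub_cancel]
    rw [Nat.sub_sub_self hi', Nat.choose_symm hi']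
    ring
  rw [Finset.sum_congr rfl step, gsum_id b a n, add_comm b a]

private theorem sq_split (i : ℕ) :
    ((i : ℝ≥0∞)) * (i : ℝ≥0∞) = ((i*(i-1) : ℕ) : ℝ≥0∞) + (i : ℝ≥0∞) := by
  cases i with
  | zero => simp
  | succ j =>
    push_cast [Nat.succ_sub_one]
    ring

private theorem gsum_fall (a b : ℝ≥0∞) (n : ℕ) :
    ∑ i ∈ Finset.range (n+1), a^i * b^(n-i) * (n.choose i : ℝ≥0∞) * ((i*(i-1) : ℕ) : ℝ≥0∞)
      = (n : ℝ≥0∞) * ((n-1 : ℕ) : ℝ≥0∞) * (a*a) * (a+b)^(n-2) := by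
  cases n with
  | zero => simp
  | succ m =>
    rw [Finset.sum_range_succ']
    have step : ∀ i : ℕ,
        a^(i+1) * b^(m+1-(i+1)) * ((m+1).choose (i+1) : ℝ≥0∞) * (((i+1)*((i+1)-1) : ℕ) : ℝ≥0∞)
          = (((m+1 : ℕ) : ℝ≥0∞) * a) * (a^i * b^(m-i) * (m.choose i : ℝ≥0∞) * (i : ℝ≥0∞)) := by
      intro i
      have key : (((m+1).choose (i+1) : ℕ) : ℝ≥0∞) * ((i+1 : ℕ) : ℝ≥0∞)
          = ((m+1 : ℕ) : ℝ≥0∞) * ((m.choose i : ℕ) : ℝ≥0∞) := by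
        exact_mod_cast congrArg (Nat.cast (R := ℝ≥0∞)) (Nat.add_one_mul_choose_eq m i).symm
      rw [Nat.succ_sub_succ, Nat.succ_sub_one]
      calc a^(i+1) * b^(m-i) * ((m+1).choose (i+1) : ℝ≥0∞) * (((i+1)*i : ℕ) : ℝ≥0∞)
          = (a^i * b^(m-i) * a * (i : ℝ≥0∞)) *
              (((m+1).choose (i+1) : ℝ≥0∞) * ((i+1 : ℕ) : ℝ≥0∞)) := by
            push_cast; ring
        _ = (a^i * b^(m-i) * a * (i : ℝ≥0∞)) *
              (((m+1 : ℕ) : ℝ≥0∞) * ((m.choose i : ℕ) : ℝ≥0∞)) := by rw [key]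
        _ = (((m+1 : ℕ) : ℝ≥0∞) * a) * (a^i * b^(m-i) * (m.choose i : ℝ≥0∞) * (i : ℝ≥0∞)) := by
            ring
    rw [Finset.sum_congr rfl fun i _ => step i]
    simp only [zero_mul, Nat.cast_zero, mul_zero, add_zero]
    rw [← Finset.mul_sum, gsum_id a b m]
    simp [Nat.succ_sub_one]
    ring

private theorem gsum_sq (a b : ℝ≥0∞) (n : ℕ) :
    ∑ i ∈ Finset.range (n+1), a^i * b^(n-i) * (n.choose i : ℝ≥0∞) * ((i : ℝ≥0∞) * (i : ℝ≥0∞))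
      = (n : ℝ≥0∞) * ((n-1 : ℕ) : ℝ≥0∞) * (a*a) * (a+b)^(n-2)
        + (n : ℝ≥0∞) * a * (a+b)^(n-1) := by
  have step : ∀ i ∈ Finset.range (n+1),
      a^i * b^(n-i) * (n.choose i : ℝ≥0∞) * ((i : ℝ≥0∞) * (i : ℝ≥0∞))
        = a^i * b^(n-i) * (n.choose i : ℝ≥0∞) * ((i*(i-1) : ℕ) : ℝ≥0∞)
          + a^i * b^(n-i) * (n.choose i : ℝ≥0∞) * (i : ℝ≥0∞) := by
    intro i _
    rw [sq_split]
    ring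
  rw [Finset.sum_congr rfl step, Finset.sum_add_distrib, gsum_fall, gsum_id]

private theorem gsum_cross (a b : ℝ≥0∞) (n : ℕ) :
    ∑ i ∈ Finset.range (n+1), a^i * b^(n-i) * (n.choose i : ℝ≥0∞)
        * ((i : ℝ≥0∞) * ((n-i : ℕ) : ℝ≥0∞))
      = (n : ℝ≥0∞) * ((n-1 : ℕ) : ℝ≥0∞) * (a*b) * (a+b)^(n-2) := by
  cases n with
  | zero => simp
  | succ m =>
    rw [Finset.sum_range_succ']
    have step : ∀ i : ℕ,
        a^(i+1) * b^(m+1-(i+1)) * ((m+1).choose (i+1) : ℝ≥0∞)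
            * (((i+1 : ℕ) : ℝ≥0∞) * ((m+1-(i+1) : ℕ) : ℝ≥0∞))
          = (((m+1 : ℕ) : ℝ≥0∞) * a)
              * (a^i * b^(m-i) * (m.choose i : ℝ≥0∞) * ((m-i : ℕ) : ℝ≥0∞)) := by
      intro i
      have key : (((m+1).choose (i+1) : ℕ) : ℝ≥0∞) * ((i+1 : ℕ) : ℝ≥0∞)
          = ((m+1 : ℕ) : ℝ≥0∞) * ((m.choose i : ℕ) : ℝ≥0∞) := by
        exact_mod_cast congrArg (Nat.cast (R := ℝ≥0∞)) (Nat.add_one_mul_choose_eq m i).symm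
      rw [Nat.succ_sub_succ]
      calc a^(i+1) * b^(m-i) * ((m+1).choose (i+1) : ℝ≥0∞)
              * (((i+1 : ℕ) : ℝ≥0∞) * ((m-i : ℕ) : ℝ≥0∞))
          = (a^i * b^(m-i) * a * ((m-i : ℕ) : ℝ≥0∞)) *
              (((m+1).choose (i+1) : ℝ≥0∞) * ((i+1 : ℕ) : ℝ≥0∞)) := by ring
        _ = (a^i * b^(m-i) * a * ((m-i : ℕ) : ℝ≥0∞)) *
              (((m+1 : ℕ) : ℝ≥0∞) * ((m.choose i : ℕ) : ℝ≥0∞)) := by rw [key]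
        _ = (((m+1 : ℕ) : ℝ≥0∞) * a)
              * (a^i * b^(m-i) * (m.choose i : ℝ≥0∞) * ((m-i : ℕ) : ℝ≥0∞)) := by ring
    rw [Finset.sum_congr rfl fun i _ => step i]
    simp only [Nat.cast_zero, zero_mul, mul_zero, add_zero]
    rw [← Finset.mul_sum, gsum_rev a b m]
    simp [Nat.succ_sub_one]
    ring

/-! ### Expectation with respect to a binomial PMF -/

theorem EB_aux {a : ℝ≥0∞} (h : a ≤ 1) : a.toNNReal ≤ 1 := by
  have := ENNReal.toNNReal_mono ENNReal.one_ne_top h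
  simpa using this

noncomputable def EB (a : ℝ≥0∞) (h : a ≤ 1) (n : ℕ) (g : ℕ → ℝ≥0∞) : ℝ≥0∞ :=
  ∑ i : Fin (n+1), PMF.binomial a.toNNReal (EB_aux h) n i * g (i : ℕ)

theorem EB_congr {a : ℝ≥0∞} {h : a ≤ 1} {n : ℕ} {g g' : ℕ → ℝ≥0∞}
    (H : ∀ i, g i = g' i) : EB a h n g = EB a h n g' := by
  unfold EB
  exact Finset.sum_congr rfl fun i _ => by rw [H]

theorem EB_eq_range (a : ℝ≥0∞) (h : a ≤ 1) (n : ℕ) (g : ℕ → ℝ≥0∞) :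
    EB a h n g = ∑ i ∈ Finset.range (n+1), a^i * (1-a)^(n-i) * (n.choose i : ℝ≥0∞) * g i := by
  unfold EB
  rw [← Fin.sum_univ_eq_sum_range (fun i => a^i * (1-a)^(n-i) * (n.choose i : ℝ≥0∞) * g i) (n+1)]
  refine Finset.sum_congr rfl fun i _ => ?_
  rw [PMF.binomial_apply, Fin.val_last]
  have ha : a ≠ ⊤ := ne_top_of_le_ne_top ENNReal.one_ne_top h
  simp only [ENNReal.coe_mul, ENNReal.coe_pow, ENNReal.coe_sub, ENNReal.coe_one,
    ENNReal.coe_toNNReal ha, ENNReal.coe_natCast]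

theorem EB_const (a : ℝ≥0∞) (h : a ≤ 1) (n : ℕ) (c : ℝ≥0∞) :
    EB a h n (fun _ => c) = c := by
  unfold EB
  rw [← Finset.sum_mul,
    show ∑ i : Fin (n+1), (PMF.binomial a.toNNReal (EB_aux h) n) i = 1 by
      rw [← tsum_fintype (L := SummationFilter.unconditional _)]; exact (PMF.binomial a.toNNReal (EB_aux h) n).tsum_coe,
    one_mul]

theorem EB_expand (a : ℝ≥0∞) (h : a ≤ 1) (n : ℕ) (c1 c2 c3 c4 c5 : ℝ≥0∞) :
    EB a h n (fun i => c1 * ((i : ℝ≥0∞) * ((n-i : ℕ) : ℝ≥0∞))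
        + c2 * ((i : ℝ≥0∞) * (i : ℝ≥0∞)) + c3 * (i : ℝ≥0∞)
        + c4 * ((n-i : ℕ) : ℝ≥0∞) + c5)
      = c1 * ((n : ℝ≥0∞) * ((n-1 : ℕ) : ℝ≥0∞) * (a*(1-a)))
        + c2 * ((n : ℝ≥0∞) * ((n-1 : ℕ) : ℝ≥0∞) * (a*a) + (n : ℝ≥0∞)*a)
        + c3 * ((n : ℝ≥0∞)*a) + c4 * ((n : ℝ≥0∞)*(1-a)) + c5 := by
  have hab : a + (1-a) = 1 := add_tsub_cancel_of_le h
  rw [EB_eq_range]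
  have e1 : ∑ i ∈ Finset.range (n+1), a^i * (1-a)^(n-i) * (n.choose i : ℝ≥0∞)
        * (c1 * ((i : ℝ≥0∞) * ((n-i : ℕ) : ℝ≥0∞)))
      = c1 * ((n : ℝ≥0∞) * ((n-1 : ℕ) : ℝ≥0∞) * (a*(1-a))) := by
    rw [Finset.sum_congr rfl fun i _ =>
      show a^i * (1-a)^(n-i) * (n.choose i : ℝ≥0∞) * (c1 * ((i : ℝ≥0∞) * ((n-i : ℕ) : ℝ≥0∞)))
        = c1 * (a^i * (1-a)^(n-i) * (n.choose i : ℝ≥0∞) * ((i : ℝ≥0∞) * ((n-i : ℕ) : ℝ≥0∞)))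
        by ring, ← Finset.mul_sum, gsum_cross, hab, one_pow, mul_one]
  have e2 : ∑ i ∈ Finset.range (n+1), a^i * (1-a)^(n-i) * (n.choose i : ℝ≥0∞)
        * (c2 * ((i : ℝ≥0∞) * (i : ℝ≥0∞)))
      = c2 * ((n : ℝ≥0∞) * ((n-1 : ℕ) : ℝ≥0∞) * (a*a) + (n : ℝ≥0∞)*a) := by
    rw [Finset.sum_congr rfl fun i _ =>
      show a^i * (1-a)^(n-i) * (n.choose i : ℝ≥0∞) * (c2 * ((i : ℝ≥0∞) * (i : ℝ≥0∞)))
        = c2 * (a^i * (1-a)^(n-i) * (n.choose i : ℝ≥0∞) * ((i : ℝ≥0∞) * (i : ℝ≥0∞)))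
        by ring, ← Finset.mul_sum, gsum_sq, hab, one_pow, one_pow, mul_one, mul_one]
  have e3 : ∑ i ∈ Finset.range (n+1), a^i * (1-a)^(n-i) * (n.choose i : ℝ≥0∞)
        * (c3 * (i : ℝ≥0∞))
      = c3 * ((n : ℝ≥0∞)*a) := by
    rw [Finset.sum_congr rfl fun i _ =>
      show a^i * (1-a)^(n-i) * (n.choose i : ℝ≥0∞) * (c3 * (i : ℝ≥0∞))
        = c3 * (a^i * (1-a)^(n-i) * (n.choose i : ℝ≥0∞) * (i : ℝ≥0∞))
        by ring, ← Finset.mul_sum, gsum_id, hab, one_pow, mul_one]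
  have e4 : ∑ i ∈ Finset.range (n+1), a^i * (1-a)^(n-i) * (n.choose i : ℝ≥0∞)
        * (c4 * ((n-i : ℕ) : ℝ≥0∞))
      = c4 * ((n : ℝ≥0∞)*(1-a)) := by
    rw [Finset.sum_congr rfl fun i _ =>
      show a^i * (1-a)^(n-i) * (n.choose i : ℝ≥0∞) * (c4 * ((n-i : ℕ) : ℝ≥0∞))
        = c4 * (a^i * (1-a)^(n-i) * (n.choose i : ℝ≥0∞) * ((n-i : ℕ) : ℝ≥0∞))
        by ring, ← Finset.mul_sum, gsum_rev, hab, one_pow, mul_one]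
  have e5 : ∑ i ∈ Finset.range (n+1), a^i * (1-a)^(n-i) * (n.choose i : ℝ≥0∞) * c5 = c5 := by
    rw [← Finset.sum_mul, gsum_mass, hab, one_pow, one_mul]
  simp only [mul_add, Finset.sum_add_distrib]
  rw [e1, e2, e3, e4, e5]
  ring

/-! ### tsum / lintegral lemmas for PMF -/

theorem tsum_bind_mul {α β : Type*} (q : PMF α) (f : α → PMF β) (g : β → ℝ≥0∞) :
    ∑' b, (q.bind f) b * g b = ∑' a, q a * ∑' b, (f a) b * g b := by
  simp_rw [PMF.bind_apply, ← ENNReal.tsum_mul_right]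
  rw [ENNReal.tsum_comm]
  simp_rw [mul_assoc, ENNReal.tsum_mul_left]

theorem tsum_map_mul {α β : Type*} (q : PMF α) (h : α → β) (g : β → ℝ≥0∞) :
    ∑' b, (q.map h) b * g b = ∑' a, q a * g (h a) := by
  simp_rw [PMF.map_apply, ← ENNReal.tsum_mul_right]
  rw [ENNReal.tsum_comm]
  congr 1; ext a
  rw [tsum_eq_single (h a) (by intro b hb; simp [hb])]
  simp

theorem pmf_monad_bind {α β : Type u} (q : PMF α) (f : α → PMF β) :
    (q >>= f) = q.bind f := rfl

theorem pmf_monad_pure {α : Type*} (a : α) :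
    (Pure.pure a : PMF α) = PMF.pure a := rfl

theorem tsum_pure_mul {α : Type*} (a : α) (g : α → ℝ≥0∞) :
    ∑' b, (PMF.pure a) b * g b = g a := by
  rw [tsum_eq_single a (by intro b hb; simp [PMF.pure_apply, hb])]
  simp

theorem lintegral_pmf {α : Type*} [MeasurableSpace α] [MeasurableSingletonClass α] [Countable α]
    (q : PMF α) (g : α → ℝ≥0∞) : ∫⁻ a, g a ∂q.toMeasure = ∑' a, q a * g a := by
  rw [MeasureTheory.lintegral_countable']
  congr 1; ext a
  rw [PMF.toMeasure_apply_singleton _ _ (measurableSet_singleton a), mul_comm]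

theorem lint_noisy (k : ℕ) (p : ℝ) (hp0 : 0 ≤ p) (hp1 : p ≤ 1) (g : ℕ × ℕ → ℝ≥0∞) :
    ∫⁻ ω, g ω ∂(noisyPair k p hp0 hp1).toMeasure =
    EB (ENNReal.ofReal p) (ENNReal.ofReal_le_one.mpr hp1) k (fun x =>
    EB (ENNReal.ofReal p) (ENNReal.ofReal_le_one.mpr hp1) k (fun b1 =>
    EB (ENNReal.ofReal p) (ENNReal.ofReal_le_one.mpr hp1) k (fun b2 =>
    EB (1 - ENNReal.ofReal p) tsub_le_self x (fun c =>
    EB (ENNReal.ofReal p) (ENNReal.ofReal_le_one.mpr hp1) (k - x) (fun d =>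
      g (b1 + x, b2 + c + d)))))) := by
  rw [lintegral_pmf]
  have e1 : ∀ n h, PMF.binomial (ENNReal.ofReal p).toNNReal h n
      = PMF.binomial (Real.toNNReal p) (Real.toNNReal_le_one.mpr hp1) n := fun _ _ => rfl
  have e2q : (1 - ENNReal.ofReal p).toNNReal = 1 - Real.toNNReal p := by
    rw [show (1:ℝ≥0∞) - ENNReal.ofReal p = ((1 - Real.toNNReal p : NNReal) : ℝ≥0∞) by
      rw [ENNReal.coe_sub, ENNReal.coe_one]; rfl, ENNReal.toNNReal_coe]
  have e2 : ∀ n h, PMF.binomial (1 - ENNReal.ofReal p).toNNReal h n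
      = PMF.binomial (1 - Real.toNNReal p) tsub_le_self n := by
    intro n h; congr 1
  unfold noisyPair EB
  simp only [e1, e2, pmf_monad_bind, pmf_monad_pure, tsum_bind_mul, tsum_map_mul, tsum_pure_mul,
    tsum_fintype]

/-! ### the three nested expectations -/

theorem nested_fst (a : ℝ≥0∞) (h : a ≤ 1) (k : ℕ) :
    EB a h k (fun x => EB a h k (fun b1 => EB a h k (fun b2 =>
      EB (1-a) tsub_le_self x (fun c => EB a h (k - x) (fun d =>
        (((b1 + x : ℕ)) : ℝ≥0∞))))))
      = (k : ℝ≥0∞) * a + (k : ℝ≥0∞) * a := by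
  have inner : ∀ x : ℕ, EB a h k (fun b1 => (((b1 + x : ℕ)) : ℝ≥0∞))
      = (k : ℝ≥0∞) * a + (x : ℝ≥0∞) := by
    intro x
    calc EB a h k (fun b1 => (((b1 + x : ℕ)) : ℝ≥0∞))
        = EB a h k (fun b1 => 0 * ((b1 : ℝ≥0∞) * ((k-b1 : ℕ) : ℝ≥0∞))
            + 0 * ((b1 : ℝ≥0∞) * (b1 : ℝ≥0∞)) + 1 * (b1 : ℝ≥0∞)
            + 0 * ((k-b1 : ℕ) : ℝ≥0∞) + (x : ℝ≥0∞)) :=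
          EB_congr fun b1 => by push_cast; ring
      _ = (k : ℝ≥0∞) * a + (x : ℝ≥0∞) := by rw [EB_expand]; ring
  calc EB a h k (fun x => EB a h k (fun b1 => EB a h k (fun b2 =>
        EB (1-a) tsub_le_self x (fun c => EB a h (k - x) (fun d =>
          (((b1 + x : ℕ)) : ℝ≥0∞))))))
      = EB a h k (fun x => (k : ℝ≥0∞) * a + (x : ℝ≥0∞)) := by
        refine EB_congr fun x => ?_
        simp only [EB_const]
        exact inner x
    _ = EB a h k (fun x => 0 * ((x : ℝ≥0∞) * ((k-x : ℕ) : ℝ≥0∞))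
            + 0 * ((x : ℝ≥0∞) * (x : ℝ≥0∞)) + 1 * (x : ℝ≥0∞)
            + 0 * ((k-x : ℕ) : ℝ≥0∞) + ((k : ℝ≥0∞) * a)) :=
        EB_congr fun x => by ring
    _ = (k : ℝ≥0∞) * a + (k : ℝ≥0∞) * a := by rw [EB_expand]; ring

theorem nested_snd (a : ℝ≥0∞) (h : a ≤ 1) (k : ℕ) :
    EB a h k (fun x => EB a h k (fun b1 => EB a h k (fun b2 =>
      EB (1-a) tsub_le_self x (fun c => EB a h (k - x) (fun d =>
        (((b2 + c + d : ℕ)) : ℝ≥0∞))))))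
      = (k : ℝ≥0∞) * a + (k : ℝ≥0∞) * a * (1-a) + (k : ℝ≥0∞) * (1-a) * a := by
  have hd : ∀ x b2 c : ℕ, EB a h (k - x) (fun d => (((b2 + c + d : ℕ)) : ℝ≥0∞))
      = ((b2 : ℝ≥0∞) + (c : ℝ≥0∞)) + ((k-x : ℕ) : ℝ≥0∞) * a := by
    intro x b2 c
    calc EB a h (k-x) (fun d => (((b2 + c + d : ℕ)) : ℝ≥0∞))
        = EB a h (k-x) (fun d => 0 * ((d : ℝ≥0∞) * (((k-x)-d : ℕ) : ℝ≥0∞))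
            + 0 * ((d : ℝ≥0∞) * (d : ℝ≥0∞)) + 1 * (d : ℝ≥0∞)
            + 0 * (((k-x)-d : ℕ) : ℝ≥0∞) + ((b2 : ℝ≥0∞) + (c : ℝ≥0∞))) :=
          EB_congr fun d => by push_cast; ring
      _ = _ := by rw [EB_expand]; ring
  have hc : ∀ x b2 : ℕ, EB (1-a) tsub_le_self x
        (fun c => ((b2 : ℝ≥0∞) + (c : ℝ≥0∞)) + ((k-x : ℕ) : ℝ≥0∞) * a)
      = (b2 : ℝ≥0∞) + (x : ℝ≥0∞) * (1-a) + ((k-x : ℕ) : ℝ≥0∞) * a := by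
    intro x b2
    calc EB (1-a) tsub_le_self x
          (fun c => ((b2 : ℝ≥0∞) + (c : ℝ≥0∞)) + ((k-x : ℕ) : ℝ≥0∞) * a)
        = EB (1-a) tsub_le_self x (fun c => 0 * ((c : ℝ≥0∞) * ((x-c : ℕ) : ℝ≥0∞))
            + 0 * ((c : ℝ≥0∞) * (c : ℝ≥0∞)) + 1 * (c : ℝ≥0∞)
            + 0 * ((x-c : ℕ) : ℝ≥0∞) + ((b2 : ℝ≥0∞) + ((k-x : ℕ) : ℝ≥0∞) * a)) :=
          EB_congr fun c => by ring
      _ = _ := by rw [EB_expand]; ring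
  have hb2 : ∀ x : ℕ, EB a h k
        (fun b2 => (b2 : ℝ≥0∞) + (x : ℝ≥0∞) * (1-a) + ((k-x : ℕ) : ℝ≥0∞) * a)
      = (k : ℝ≥0∞) * a + (x : ℝ≥0∞) * (1-a) + ((k-x : ℕ) : ℝ≥0∞) * a := by
    intro x
    calc EB a h k (fun b2 => (b2 : ℝ≥0∞) + (x : ℝ≥0∞) * (1-a) + ((k-x : ℕ) : ℝ≥0∞) * a)
        = EB a h k (fun b2 => 0 * ((b2 : ℝ≥0∞) * ((k-b2 : ℕ) : ℝ≥0∞))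
            + 0 * ((b2 : ℝ≥0∞) * (b2 : ℝ≥0∞)) + 1 * (b2 : ℝ≥0∞)
            + 0 * ((k-b2 : ℕ) : ℝ≥0∞)
            + ((x : ℝ≥0∞) * (1-a) + ((k-x : ℕ) : ℝ≥0∞) * a)) :=
          EB_congr fun b2 => by ring
      _ = _ := by rw [EB_expand]; ring
  calc EB a h k (fun x => EB a h k (fun b1 => EB a h k (fun b2 =>
        EB (1-a) tsub_le_self x (fun c => EB a h (k - x) (fun d =>
          (((b2 + c + d : ℕ)) : ℝ≥0∞))))))
      = EB a h k (fun x => (k : ℝ≥0∞) * a + (x : ℝ≥0∞) * (1-a) + ((k-x : ℕ) : ℝ≥0∞) * a) := by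
        refine EB_congr fun x => ?_
        calc EB a h k (fun b1 => EB a h k (fun b2 =>
              EB (1-a) tsub_le_self x (fun c => EB a h (k - x) (fun d =>
                (((b2 + c + d : ℕ)) : ℝ≥0∞)))))
            = EB a h k (fun b1 => (k : ℝ≥0∞) * a + (x : ℝ≥0∞) * (1-a)
                + ((k-x : ℕ) : ℝ≥0∞) * a) := by
              refine EB_congr fun b1 => ?_
              rw [EB_congr fun b2 => EB_congr fun c => hd x b2 c]
              rw [EB_congr fun b2 => hc x b2]
              exact hb2 x
          _ = _ := EB_const _ _ _ _
    _ = (k : ℝ≥0∞) * a + (k : ℝ≥0∞) * a * (1-a) + (k : ℝ≥0∞) * (1-a) * a := by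
        rw [show (fun x : ℕ => (k : ℝ≥0∞) * a + (x : ℝ≥0∞) * (1-a) + ((k-x : ℕ) : ℝ≥0∞) * a)
          = (fun x : ℕ => 0 * ((x : ℝ≥0∞) * ((k-x : ℕ) : ℝ≥0∞))
            + 0 * ((x : ℝ≥0∞) * (x : ℝ≥0∞)) + (1-a) * (x : ℝ≥0∞)
            + a * ((k-x : ℕ) : ℝ≥0∞) + ((k : ℝ≥0∞) * a)) from funext fun x => by ring]
        rw [EB_expand]; ring

theorem nested_mul (a : ℝ≥0∞) (h : a ≤ 1) (k : ℕ) :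
    EB a h k (fun x => EB a h k (fun b1 => EB a h k (fun b2 =>
      EB (1-a) tsub_le_self x (fun c => EB a h (k - x) (fun d =>
        (((b1 + x : ℕ)) : ℝ≥0∞) * (((b2 + c + d : ℕ)) : ℝ≥0∞))))))
      = a * ((k : ℝ≥0∞) * ((k-1 : ℕ) : ℝ≥0∞) * (a*(1-a)))
        + (1-a) * ((k : ℝ≥0∞) * ((k-1 : ℕ) : ℝ≥0∞) * (a*a) + (k : ℝ≥0∞)*a)
        + ((k : ℝ≥0∞) * a * (1-a) + (k : ℝ≥0∞) * a) * ((k : ℝ≥0∞)*a)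
        + ((k : ℝ≥0∞) * a * a) * ((k : ℝ≥0∞)*(1-a))
        + (k : ℝ≥0∞) * (k : ℝ≥0∞) * a * a := by
  have hd : ∀ x b1 b2 c : ℕ, EB a h (k - x)
        (fun d => (((b1 + x : ℕ)) : ℝ≥0∞) * (((b2 + c + d : ℕ)) : ℝ≥0∞))
      = ((b1 : ℝ≥0∞) + (x : ℝ≥0∞)) *
          (((b2 : ℝ≥0∞) + (c : ℝ≥0∞)) + ((k-x : ℕ) : ℝ≥0∞) * a) := by
    intro x b1 b2 c
    calc EB a h (k-x) (fun d => (((b1 + x : ℕ)) : ℝ≥0∞) * (((b2 + c + d : ℕ)) : ℝ≥0∞))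
        = EB a h (k-x) (fun d => 0 * ((d : ℝ≥0∞) * (((k-x)-d : ℕ) : ℝ≥0∞))
            + 0 * ((d : ℝ≥0∞) * (d : ℝ≥0∞))
            + ((b1 : ℝ≥0∞) + (x : ℝ≥0∞)) * (d : ℝ≥0∞)
            + 0 * (((k-x)-d : ℕ) : ℝ≥0∞)
            + ((b1 : ℝ≥0∞) + (x : ℝ≥0∞)) * ((b2 : ℝ≥0∞) + (c : ℝ≥0∞))) :=
          EB_congr fun d => by push_cast; ring
      _ = _ := by rw [EB_expand]; ring
  have hc : ∀ x b1 b2 : ℕ, EB (1-a) tsub_le_self x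
        (fun c => ((b1 : ℝ≥0∞) + (x : ℝ≥0∞)) *
          (((b2 : ℝ≥0∞) + (c : ℝ≥0∞)) + ((k-x : ℕ) : ℝ≥0∞) * a))
      = ((b1 : ℝ≥0∞) + (x : ℝ≥0∞)) *
          ((b2 : ℝ≥0∞) + (x : ℝ≥0∞) * (1-a) + ((k-x : ℕ) : ℝ≥0∞) * a) := by
    intro x b1 b2
    calc EB (1-a) tsub_le_self x
          (fun c => ((b1 : ℝ≥0∞) + (x : ℝ≥0∞)) *
            (((b2 : ℝ≥0∞) + (c : ℝ≥0∞)) + ((k-x : ℕ) : ℝ≥0∞) * a))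
        = EB (1-a) tsub_le_self x (fun c => 0 * ((c : ℝ≥0∞) * ((x-c : ℕ) : ℝ≥0∞))
            + 0 * ((c : ℝ≥0∞) * (c : ℝ≥0∞))
            + ((b1 : ℝ≥0∞) + (x : ℝ≥0∞)) * (c : ℝ≥0∞)
            + 0 * ((x-c : ℕ) : ℝ≥0∞)
            + ((b1 : ℝ≥0∞) + (x : ℝ≥0∞)) * ((b2 : ℝ≥0∞) + ((k-x : ℕ) : ℝ≥0∞) * a)) :=
          EB_congr fun c => by ring
      _ = _ := by rw [EB_expand]; ring
  have hb2 : ∀ x b1 : ℕ, EB a h k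
        (fun b2 => ((b1 : ℝ≥0∞) + (x : ℝ≥0∞)) *
          ((b2 : ℝ≥0∞) + (x : ℝ≥0∞) * (1-a) + ((k-x : ℕ) : ℝ≥0∞) * a))
      = ((b1 : ℝ≥0∞) + (x : ℝ≥0∞)) *
          ((k : ℝ≥0∞) * a + (x : ℝ≥0∞) * (1-a) + ((k-x : ℕ) : ℝ≥0∞) * a) := by
    intro x b1
    calc EB a h k (fun b2 => ((b1 : ℝ≥0∞) + (x : ℝ≥0∞)) *
            ((b2 : ℝ≥0∞) + (x : ℝ≥0∞) * (1-a) + ((k-x : ℕ) : ℝ≥0∞) * a))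
        = EB a h k (fun b2 => 0 * ((b2 : ℝ≥0∞) * ((k-b2 : ℕ) : ℝ≥0∞))
            + 0 * ((b2 : ℝ≥0∞) * (b2 : ℝ≥0∞))
            + ((b1 : ℝ≥0∞) + (x : ℝ≥0∞)) * (b2 : ℝ≥0∞)
            + 0 * ((k-b2 : ℕ) : ℝ≥0∞)
            + ((b1 : ℝ≥0∞) + (x : ℝ≥0∞)) *
                ((x : ℝ≥0∞) * (1-a) + ((k-x : ℕ) : ℝ≥0∞) * a)) :=
          EB_congr fun b2 => by ring
      _ = _ := by rw [EB_expand]; ring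
  have hb1 : ∀ x : ℕ, EB a h k
        (fun b1 => ((b1 : ℝ≥0∞) + (x : ℝ≥0∞)) *
          ((k : ℝ≥0∞) * a + (x : ℝ≥0∞) * (1-a) + ((k-x : ℕ) : ℝ≥0∞) * a))
      = ((k : ℝ≥0∞) * a + (x : ℝ≥0∞)) *
          ((k : ℝ≥0∞) * a + (x : ℝ≥0∞) * (1-a) + ((k-x : ℕ) : ℝ≥0∞) * a) := by
    intro x
    calc EB a h k (fun b1 => ((b1 : ℝ≥0∞) + (x : ℝ≥0∞)) *
            ((k : ℝ≥0∞) * a + (x : ℝ≥0∞) * (1-a) + ((k-x : ℕ) : ℝ≥0∞) * a))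
        = EB a h k (fun b1 => 0 * ((b1 : ℝ≥0∞) * ((k-b1 : ℕ) : ℝ≥0∞))
            + 0 * ((b1 : ℝ≥0∞) * (b1 : ℝ≥0∞))
            + ((k : ℝ≥0∞) * a + (x : ℝ≥0∞) * (1-a) + ((k-x : ℕ) : ℝ≥0∞) * a) * (b1 : ℝ≥0∞)
            + 0 * ((k-b1 : ℕ) : ℝ≥0∞)
            + (x : ℝ≥0∞) *
                ((k : ℝ≥0∞) * a + (x : ℝ≥0∞) * (1-a) + ((k-x : ℕ) : ℝ≥0∞) * a)) :=
          EB_congr fun b1 => by ring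
      _ = _ := by rw [EB_expand]; ring
  calc EB a h k (fun x => EB a h k (fun b1 => EB a h k (fun b2 =>
        EB (1-a) tsub_le_self x (fun c => EB a h (k - x) (fun d =>
          (((b1 + x : ℕ)) : ℝ≥0∞) * (((b2 + c + d : ℕ)) : ℝ≥0∞))))))
      = EB a h k (fun x => ((k : ℝ≥0∞) * a + (x : ℝ≥0∞)) *
          ((k : ℝ≥0∞) * a + (x : ℝ≥0∞) * (1-a) + ((k-x : ℕ) : ℝ≥0∞) * a)) := by
        refine EB_congr fun x => ?_
        rw [EB_congr fun b1 => EB_congr fun b2 => EB_congr fun c => hd x b1 b2 c]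
        rw [EB_congr fun b1 => EB_congr fun b2 => hc x b1 b2]
        rw [EB_congr fun b1 => hb2 x b1]
        exact hb1 x
    _ = EB a h k (fun x => a * ((x : ℝ≥0∞) * ((k-x : ℕ) : ℝ≥0∞))
          + (1-a) * ((x : ℝ≥0∞) * (x : ℝ≥0∞))
          + ((k : ℝ≥0∞) * a * (1-a) + (k : ℝ≥0∞) * a) * (x : ℝ≥0∞)
          + ((k : ℝ≥0∞) * a * a) * ((k-x : ℕ) : ℝ≥0∞)
          + (k : ℝ≥0∞) * (k : ℝ≥0∞) * a * a) :=
        EB_congr fun x => by ring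
    _ = _ := by rw [EB_expand]

/-- In the noisy ordered pairwise comparison model with parameters
`k ∈ ℕ` and `p ∈ [0, 1]`, the covariance `Cov(X_i, X_j) = E[X_i·X_j] − E[X_i]·E[X_j]`
equals `kp(1 − p)(1 − 2p)`. -/
theorem covariance_Xi_Xj (k : ℕ) (p : ℝ) (hp0 : 0 ≤ p) (hp1 : p ≤ 1) :
    (∫ ω, ((ω.1 : ℕ) : ℝ) * ((ω.2 : ℕ) : ℝ) ∂(noisyPair k p hp0 hp1).toMeasure) -
      (∫ ω, ((ω.1 : ℕ) : ℝ) ∂(noisyPair k p hp0 hp1).toMeasure) *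
      (∫ ω, ((ω.2 : ℕ) : ℝ) ∂(noisyPair k p hp0 hp1).toMeasure)
      = k * p * (1 - p) * (1 - 2 * p) := by
  have hP : ENNReal.ofReal p ≤ 1 := ENNReal.ofReal_le_one.mpr hp1
  have hq0 : (0:ℝ) ≤ 1 - p := by linarith
  have hQ : (1:ℝ≥0∞) - ENNReal.ofReal p = ENNReal.ofReal (1-p) := by
    rw [ENNReal.ofReal_sub 1 hp0, ENNReal.ofReal_one]
  have hmeas : ∀ f : ℕ × ℕ → ℝ, AEStronglyMeasurable f (noisyPair k p hp0 hp1).toMeasure :=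
    fun f => (measurable_of_countable f).aestronglyMeasurable
  have I1 : ∫ ω, ((ω.1 : ℕ) : ℝ) ∂(noisyPair k p hp0 hp1).toMeasure
      = ((k : ℝ≥0∞) * ENNReal.ofReal p + (k : ℝ≥0∞) * ENNReal.ofReal p).toReal := by
    rw [integral_eq_lintegral_of_nonneg_ae (ae_of_all _ fun ω => by positivity) (hmeas _)]
    congr 1
    calc ∫⁻ ω, ENNReal.ofReal ((ω.1 : ℕ) : ℝ) ∂(noisyPair k p hp0 hp1).toMeasure
        = ∫⁻ ω, ((ω.1 : ℕ) : ℝ≥0∞) ∂(noisyPair k p hp0 hp1).toMeasure :=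
          lintegral_congr fun ω => ENNReal.ofReal_natCast _
      _ = _ := by
          simp only [lint_noisy]
          exact nested_fst _ hP k
  have I2 : ∫ ω, ((ω.2 : ℕ) : ℝ) ∂(noisyPair k p hp0 hp1).toMeasure
      = ((k : ℝ≥0∞) * ENNReal.ofReal p
          + (k : ℝ≥0∞) * ENNReal.ofReal p * (1 - ENNReal.ofReal p)
          + (k : ℝ≥0∞) * (1 - ENNReal.ofReal p) * ENNReal.ofReal p).toReal := by
    rw [integral_eq_lintegral_of_nonneg_ae (ae_of_all _ fun ω => by positivity) (hmeas _)]
    congr 1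
    calc ∫⁻ ω, ENNReal.ofReal ((ω.2 : ℕ) : ℝ) ∂(noisyPair k p hp0 hp1).toMeasure
        = ∫⁻ ω, ((ω.2 : ℕ) : ℝ≥0∞) ∂(noisyPair k p hp0 hp1).toMeasure :=
          lintegral_congr fun ω => ENNReal.ofReal_natCast _
      _ = _ := by
          simp only [lint_noisy]
          exact nested_snd _ hP k
  have I12 : ∫ ω, ((ω.1 : ℕ) : ℝ) * ((ω.2 : ℕ) : ℝ) ∂(noisyPair k p hp0 hp1).toMeasure
      = (ENNReal.ofReal p * ((k : ℝ≥0∞) * ((k-1 : ℕ) : ℝ≥0∞)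
            * (ENNReal.ofReal p * (1 - ENNReal.ofReal p)))
        + (1 - ENNReal.ofReal p) * ((k : ℝ≥0∞) * ((k-1 : ℕ) : ℝ≥0∞)
            * (ENNReal.ofReal p * ENNReal.ofReal p) + (k : ℝ≥0∞) * ENNReal.ofReal p)
        + ((k : ℝ≥0∞) * ENNReal.ofReal p * (1 - ENNReal.ofReal p)
            + (k : ℝ≥0∞) * ENNReal.ofReal p) * ((k : ℝ≥0∞) * ENNReal.ofReal p)
        + ((k : ℝ≥0∞) * ENNReal.ofReal p * ENNReal.ofReal p)
            * ((k : ℝ≥0∞) * (1 - ENNReal.ofReal p))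
        + (k : ℝ≥0∞) * (k : ℝ≥0∞) * ENNReal.ofReal p * ENNReal.ofReal p).toReal := by
    rw [integral_eq_lintegral_of_nonneg_ae (ae_of_all _ fun ω => by positivity) (hmeas _)]
    congr 1
    calc ∫⁻ ω, ENNReal.ofReal (((ω.1 : ℕ) : ℝ) * ((ω.2 : ℕ) : ℝ)) ∂(noisyPair k p hp0 hp1).toMeasure
        = ∫⁻ ω, ((ω.1 : ℕ) : ℝ≥0∞) * ((ω.2 : ℕ) : ℝ≥0∞) ∂(noisyPair k p hp0 hp1).toMeasure :=
          lintegral_congr fun ω => by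
            rw [ENNReal.ofReal_mul (by positivity), ENNReal.ofReal_natCast,
              ENNReal.ofReal_natCast]
      _ = _ := by
          simp only [lint_noisy]
          exact nested_mul _ hP k
  rw [I1, I2, I12, hQ]
  repeat
    first
    | simp only [ENNReal.toReal_mul]
    | rw [ENNReal.toReal_add]
  all_goals try finiteness
  simp only [ENNReal.toReal_natCast, ENNReal.toReal_ofReal hp0, ENNReal.toReal_ofReal hq0]
  have hk1 : (k : ℝ) * ((k-1 : ℕ) : ℝ) = k*k - k := by
    cases k with
    | zero => simp
    | succ m => push_cast [Nat.succ_sub_one]; ring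
  linear_combination (2*p^2*(1-p)) * hk1
end
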